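/- arXiv:1802.06579 — 9 statements merged into one kernel-verified Lean document; each statement's English description precedes it below -/
import Mathlib

section
/- Let G be a finite simple graph and let p and q be two planar straight-line drawings of G such that (p v).2 = (q v).2 for every vertex v. Call an object of a drawing either a vertex (whose image is a point) or an edge (whose image is the closed segment between the images of its endpoints), and for c ∈ ℝ say that an object O₁ lies left of an object O₂ on the horizontal line y = c in a drawing if both images meet this line and every point of the image of O₁ on the line has strictly smaller first coordinate than every point of the image of O₂ on the line. If for every c ∈ ℝ and every pair of distinct objects O₁, O₂ of G, the object O₁ lies left of O₂ on the line y = c in p if and only if O₁ lies left of O₂ on the line y = c in q, then the linear morph ⟨p, q⟩ is planar (and it is horizontal). -/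
section MorphHelpers

lemma comb_lt' {t a₁ b₁ a₂ b₂ : ℝ} (h0 : 0 ≤ t) (h1 : t ≤ 1) (ha : a₁ < a₂) (hb : b₁ < b₂) :
    (1-t)*a₁ + t*b₁ < (1-t)*a₂ + t*b₂ := by
  rcases eq_or_lt_of_le h0 with rfl | h0'
  · linarith
  · have h3 := mul_lt_mul_of_pos_left hb h0'
    have h2 : (1-t)*a₁ ≤ (1-t)*a₂ := mul_le_mul_of_nonneg_left ha.le (by linarith)
    linarith

lemma mk_fst_snd' {s : ℝ × ℝ} {c : ℝ} (h : s.2 = c) : (s.1, c) = s := by rw [← h]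

lemma horiz_lift' {x₁ x₂ x c : ℝ} (hx : x ∈ segment ℝ x₁ x₂) :
    ((x:ℝ), c) ∈ segment ℝ (x₁, c) (x₂, c) := by
  obtain ⟨α, β, hα, hβ, hs, he⟩ := hx
  exact ⟨α, β, hα, hβ, hs, by
    simp only [Prod.smul_mk, Prod.mk_add_mk, smul_eq_mul, Prod.mk.injEq]
    exact ⟨he, by rw [← add_mul, hs, one_mul]⟩⟩

lemma horiz_proj' {a b : ℝ × ℝ} {x c : ℝ} (hz : ((x:ℝ), c) ∈ segment ℝ a b) :
    x ∈ segment ℝ a.1 b.1 := by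
  obtain ⟨α, β, hα, hβ, hs, he⟩ := hz
  exact ⟨α, β, hα, hβ, hs, by
    have := congrArg Prod.fst he
    simpa using this⟩

lemma mem_horiz_segment' {a b : ℝ × ℝ} {c x : ℝ} (ha : a.2 = c) (hb : b.2 = c) :
    ((x:ℝ), c) ∈ segment ℝ a b ↔ x ∈ segment ℝ a.1 b.1 := by
  constructor
  · exact horiz_proj'
  · intro hx
    have h := horiz_lift' (c := c) hx
    have ha' : a = (a.1, c) := by rw [← ha]
    have hb' : b = (b.1, c) := by rw [← hb]
    rw [ha', hb']
    exact h

lemma seg_slice_convex' {a b : ℝ × ℝ} {c x₁ x₂ x : ℝ}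
    (h₁ : ((x₁:ℝ), c) ∈ segment ℝ a b) (h₂ : ((x₂:ℝ), c) ∈ segment ℝ a b)
    (hl : x₁ ≤ x) (hr : x ≤ x₂) : ((x:ℝ), c) ∈ segment ℝ a b := by
  have hx : x ∈ segment ℝ x₁ x₂ := by
    rw [segment_eq_Icc (hl.trans hr)]; exact ⟨hl, hr⟩
  exact (convex_segment a b).segment_subset h₁ h₂ (horiz_lift' hx)

lemma eq_endpoint_of_snd' {a b z : ℝ × ℝ} (hz : z ∈ segment ℝ a b)
    (h2 : z.2 = a.2) (hne : b.2 ≠ a.2) : z = a := by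
  obtain ⟨α, β, hα, hβ, hs, he⟩ := hz
  have h2' : α * a.2 + β * b.2 = a.2 := by
    have := congrArg Prod.snd he
    simpa [h2] using this
  have hβ0 : β = 0 := by
    have hz0 : β * (b.2 - a.2) = 0 := by linear_combination h2' - a.2 * hs
    rcases mul_eq_zero.mp hz0 with h | h
    · exact h
    · exact absurd (by linarith : b.2 = a.2) hne
  have : α = 1 := by linarith
  rw [← he, hβ0, this]
  simp

lemma seg_snd_const' {a b z : ℝ × ℝ} {c : ℝ} (hz : z ∈ segment ℝ a b)
    (ha : a.2 = c) (hb : b.2 = c) : z.2 = c := by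
  obtain ⟨α, β, hα, hβ, hs, he⟩ := hz
  have h2 : α * a.2 + β * b.2 = z.2 := by
    have := congrArg Prod.snd he
    simpa using this
  linear_combination -h2 + α * ha + β * hb + c * hs

lemma seg_decomp' {t : ℝ} {pu pv qu qv z : ℝ × ℝ} (hu : pu.2 = qu.2) (hv : pv.2 = qv.2)
    (hz : z ∈ segment ℝ ((1-t) • pu + t • qu) ((1-t) • pv + t • qv)) :
    ∃ a ∈ segment ℝ pu pv, ∃ b ∈ segment ℝ qu qv,
      a.2 = z.2 ∧ b.2 = z.2 ∧ z.1 = (1-t) * a.1 + t * b.1 := by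
  obtain ⟨α, β, hα, hβ, hs, he⟩ := hz
  refine ⟨α • pu + β • pv, ⟨α, β, hα, hβ, hs, rfl⟩,
    α • qu + β • qv, ⟨α, β, hα, hβ, hs, rfl⟩, ?_, ?_, ?_⟩
  · have := congrArg Prod.snd he
    simp only [Prod.snd_add, Prod.smul_snd, smul_eq_mul] at this ⊢
    rw [← this]
    linear_combination α * t * hu + β * t * hv
  · have := congrArg Prod.snd he
    simp only [Prod.snd_add, Prod.smul_snd, smul_eq_mul] at this ⊢
    rw [← this]
    linear_combination α * (t - 1) * hu + β * (t - 1) * hv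
  · have := congrArg Prod.fst he
    simp only [Prod.fst_add, Prod.smul_fst, smul_eq_mul] at this ⊢
    rw [← this]
    ring

lemma oneDim' {xw xu xv : ℝ} (huw : xu ≠ xw) (hvw : xv ≠ xw)
    (h : segment ℝ xw xu ∩ segment ℝ xw xv = {xw}) :
    (xu < xw ∧ xw < xv) ∨ (xv < xw ∧ xw < xu) := by
  rcases lt_or_gt_of_ne huw with h1 | h1 <;> rcases lt_or_gt_of_ne hvw with h2 | h2
  · exfalso
    have hm : max xu xv ∈ segment ℝ xw xu ∩ segment ℝ xw xv := by
      constructor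
      · rw [segment_symm, segment_eq_Icc h1.le]; exact ⟨le_max_left _ _, max_le h1.le h2.le⟩
      · rw [segment_symm, segment_eq_Icc h2.le]; exact ⟨le_max_right _ _, max_le h1.le h2.le⟩
    rw [h] at hm
    rcases max_cases xu xv with ⟨he, _⟩ | ⟨he, _⟩ <;> rw [he] at hm <;>
      simp only [Set.mem_singleton_iff] at hm
    · exact huw hm
    · exact hvw hm
  · exact Or.inl ⟨h1, h2⟩
  · exact Or.inr ⟨h2, h1⟩
  · exfalso
    have hm : min xu xv ∈ segment ℝ xw xu ∩ segment ℝ xw xv := by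
      constructor
      · rw [segment_eq_Icc h1.le]; exact ⟨le_min h1.le h2.le, min_le_left _ _⟩
      · rw [segment_eq_Icc h2.le]; exact ⟨le_min h1.le h2.le, min_le_right _ _⟩
    rw [h] at hm
    rcases min_cases xu xv with ⟨he, _⟩ | ⟨he, _⟩ <;> rw [he] at hm <;>
      simp only [Set.mem_singleton_iff] at hm
    · exact huw hm
    · exact hvw hm

end MorphHelpers

/-- A straight-line drawing `p : V → ℝ × ℝ` of a simple graph `G` is planar if it is
injective, no vertex lies on the (closed) segment of an edge it is not an endpoint of,
segments of edges sharing no endpoint are disjoint, and segments of distinct edges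
sharing exactly one endpoint `w` meet exactly in the point `p w`. -/
def IsPlanarDrawing {V : Type*} (G : SimpleGraph V) (p : V → ℝ × ℝ) : Prop :=
  Function.Injective p ∧
  (∀ u v w : V, G.Adj u v → w ≠ u → w ≠ v → p w ∉ segment ℝ (p u) (p v)) ∧
  (∀ u v w z : V, G.Adj u v → G.Adj w z → u ≠ w → u ≠ z → v ≠ w → v ≠ z →
    Disjoint (segment ℝ (p u) (p v)) (segment ℝ (p w) (p z))) ∧
  (∀ w u v : V, G.Adj w u → G.Adj w v → u ≠ v →
    segment ℝ (p w) (p u) ∩ segment ℝ (p w) (p v) = {p w})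

/-- The intermediate drawing at time `t` of the linear morph `⟨p, q⟩`. -/
def morphAt {V : Type*} (p q : V → ℝ × ℝ) (t : ℝ) : V → ℝ × ℝ :=
  fun v => (1 - t) • p v + t • q v

/-- The linear morph `⟨p, q⟩` is planar if every intermediate drawing is planar. -/
def IsPlanarMorph {V : Type*} (G : SimpleGraph V) (p q : V → ℝ × ℝ) : Prop :=
  ∀ t ∈ Set.Icc (0 : ℝ) 1, IsPlanarDrawing G (morphAt p q t)

/-- The linear morph `⟨p, q⟩` is horizontal if every vertex keeps its `y`-coordinate. -/
def IsHorizontalMorph {V : Type*} (p q : V → ℝ × ℝ) : Prop :=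
  ∀ v, (p v).2 = (q v).2

/-- The image of an object (a vertex or an edge) of `G` in the drawing `p`:
the image of a vertex is a point, the image of an edge is the closed segment
between the images of its endpoints. -/
def objImage {V : Type*} (G : SimpleGraph V) (p : V → ℝ × ℝ) :
    V ⊕ G.edgeSet → Set (ℝ × ℝ)
  | Sum.inl v => {p v}
  | Sum.inr e => Sym2.lift ⟨fun u v => segment ℝ (p u) (p v),
      fun u v => segment_symm ℝ (p u) (p v)⟩ e.1

/-- The set `S` lies left of the set `T` on the horizontal line `y = c`:
both sets meet the line, and every point of `S` on the line has strictly smaller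
first coordinate than every point of `T` on the line. -/
def LeftOfAt (c : ℝ) (S T : Set (ℝ × ℝ)) : Prop :=
  (∃ s ∈ S, s.2 = c) ∧ (∃ t ∈ T, t.2 = c) ∧
  (∀ s ∈ S, s.2 = c → ∀ t ∈ T, t.2 = c → s.1 < t.1)

section ObjHelpers

lemma trichotomy' {c : ℝ} {S T : Set (ℝ × ℝ)}
    (hSc : ∀ x₁ x₂ x : ℝ, (x₁, c) ∈ S → (x₂, c) ∈ S → x₁ ≤ x → x ≤ x₂ → (x, c) ∈ S)
    (hTc : ∀ x₁ x₂ x : ℝ, (x₁, c) ∈ T → (x₂, c) ∈ T → x₁ ≤ x → x ≤ x₂ → (x, c) ∈ T)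
    (hS : ∃ x : ℝ, (x, c) ∈ S) (hT : ∃ x : ℝ, (x, c) ∈ T)
    (hd : ∀ x : ℝ, (x, c) ∈ S → (x, c) ∉ T) :
    LeftOfAt c S T ∨ LeftOfAt c T S := by
  obtain ⟨x₀, hx₀⟩ := hS
  obtain ⟨y₀, hy₀⟩ := hT
  have key : (∀ x y : ℝ, (x, c) ∈ S → (y, c) ∈ T → x < y) ∨
      (∀ x y : ℝ, (x, c) ∈ T → (y, c) ∈ S → x < y) := by
    by_contra h
    push_neg at h
    obtain ⟨⟨x₁, y₁, hx₁, hy₁, h₁⟩, ⟨y₂, x₂, hy₂, hx₂, h₂⟩⟩ := h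
    have hne₁ : y₁ ≠ x₁ := fun h => hd x₁ hx₁ (h ▸ hy₁)
    have hne₂ : x₂ ≠ y₂ := fun h => hd x₂ hx₂ (h ▸ hy₂)
    have h₁' : y₁ < x₁ := lt_of_le_of_ne h₁ hne₁
    have h₂' : x₂ < y₂ := lt_of_le_of_ne h₂ hne₂
    rcases le_or_gt x₂ y₁ with h3 | h3
    · exact hd y₁ (hSc x₂ x₁ y₁ hx₂ hx₁ h3 h₁'.le) hy₁
    · exact hd x₂ hx₂ (hTc y₁ y₂ x₂ hy₁ hy₂ h3.le h₂'.le)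
  rcases key with h | h
  · left
    refine ⟨⟨(x₀, c), hx₀, rfl⟩, ⟨(y₀, c), hy₀, rfl⟩, ?_⟩
    intro s hs hsc t ht htc
    exact h s.1 t.1 (by rw [mk_fst_snd' hsc]; exact hs) (by rw [mk_fst_snd' htc]; exact ht)
  · right
    refine ⟨⟨(y₀, c), hy₀, rfl⟩, ⟨(x₀, c), hx₀, rfl⟩, ?_⟩
    intro s hs hsc t ht htc
    exact h s.1 t.1 (by rw [mk_fst_snd' hsc]; exact hs) (by rw [mk_fst_snd' htc]; exact ht)

variable {V : Type*} {G : SimpleGraph V}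

lemma objImage_sliceConvex (r : V → ℝ × ℝ) (O : V ⊕ G.edgeSet) (c : ℝ) :
    ∀ (x₁ x₂ x : ℝ), (x₁, c) ∈ objImage G r O → (x₂, c) ∈ objImage G r O →
      x₁ ≤ x → x ≤ x₂ → (x, c) ∈ objImage G r O := by
  rcases O with v | ⟨e, he⟩
  · intro x₁ x₂ x h₁ h₂ hl hr
    have e1 : ((x₁:ℝ), c) = r v := h₁
    have e2 : ((x₂:ℝ), c) = r v := h₂
    have hx12 : x₁ = x₂ := by
      have := e1.trans e2.symm
      exact (Prod.mk.injEq _ _ _ _ ▸ this).1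
    have hx : x = x₁ := le_antisymm (hx12 ▸ hr) hl
    show ((x:ℝ), c) = r v
    rw [hx]; exact e1
  · revert he
    induction e using Sym2.ind with
    | _ u v =>
      intro he x₁ x₂ x h₁ h₂ hl hr
      exact seg_slice_convex' h₁ h₂ hl hr

lemma objImage_decomp (p q : V → ℝ × ℝ) (hy : ∀ v, (p v).2 = (q v).2) (t : ℝ)
    (O : V ⊕ G.edgeSet) :
    ∀ z ∈ objImage G (morphAt p q t) O, ∃ a ∈ objImage G p O, ∃ b ∈ objImage G q O,
      a.2 = z.2 ∧ b.2 = z.2 ∧ z.1 = (1-t) * a.1 + t * b.1 := by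
  rcases O with v | ⟨e, he⟩
  · intro z hz
    have hz' : z = morphAt p q t v := hz
    refine ⟨p v, rfl, q v, rfl, ?_, ?_, ?_⟩
    · rw [hz']
      show (p v).2 = ((1-t) • p v + t • q v).2
      simp only [Prod.snd_add, Prod.smul_snd, smul_eq_mul]
      linear_combination t * hy v
    · rw [hz']
      show (q v).2 = ((1-t) • p v + t • q v).2
      simp only [Prod.snd_add, Prod.smul_snd, smul_eq_mul]
      linear_combination (t - 1) * hy v
    · rw [hz']
      show ((1-t) • p v + t • q v).1 = _
      simp only [Prod.fst_add, Prod.smul_fst, smul_eq_mul]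
  · revert he
    induction e using Sym2.ind with
    | _ u v =>
      intro he z hz
      exact seg_decomp' (hy u) (hy v) hz

end ObjHelpers

/-- If two planar straight-line drawings `p`, `q` of `G` agree on all `y`-coordinates
and every horizontal line crosses the same ordered sequence of objects (vertices and
edges) in both drawings, then the linear morph `⟨p, q⟩` is planar and horizontal. -/
theorem linear_morph_planar_of_same_horizontal_order
    {V : Type*} [Fintype V] (G : SimpleGraph V) (p q : V → ℝ × ℝ)
    (hp : IsPlanarDrawing G p) (hq : IsPlanarDrawing G q)
    (hy : ∀ v, (p v).2 = (q v).2)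
    (horder : ∀ (c : ℝ) (O₁ O₂ : V ⊕ G.edgeSet), O₁ ≠ O₂ →
      (LeftOfAt c (objImage G p O₁) (objImage G p O₂) ↔
        LeftOfAt c (objImage G q O₁) (objImage G q O₂))) :
    IsPlanarMorph G p q ∧ IsHorizontalMorph p q := by
  refine ⟨?_, hy⟩
  intro t ht
  obtain ⟨ht0, ht1⟩ := ht
  have hP2 : ∀ v, (morphAt p q t v).2 = (p v).2 := by
    intro v
    show ((1-t) • p v + t • q v).2 = (p v).2
    simp only [Prod.snd_add, Prod.smul_snd, smul_eq_mul]
    linear_combination -t * hy v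
  have hP1 : ∀ v, (morphAt p q t v).1 = (1-t) * (p v).1 + t * (q v).1 := by
    intro v
    show ((1-t) • p v + t • q v).1 = _
    simp only [Prod.fst_add, Prod.smul_fst, smul_eq_mul]
  have key : ∀ (c : ℝ) (O₁ O₂ : V ⊕ G.edgeSet), O₁ ≠ O₂ →
      (∀ x : ℝ, (x, c) ∈ objImage G p O₁ → (x, c) ∉ objImage G p O₂) →
      ∀ z₁ ∈ objImage G (morphAt p q t) O₁, ∀ z₂ ∈ objImage G (morphAt p q t) O₂,
        z₁.2 = c → z₂.2 = c → z₁.1 ≠ z₂.1 := by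
    intro c O₁ O₂ hne hdisj z₁ hz₁ z₂ hz₂ hc₁ hc₂
    obtain ⟨a₁, ha₁, b₁, hb₁, ha₁2, hb₁2, hx₁⟩ := objImage_decomp p q hy t O₁ z₁ hz₁
    obtain ⟨a₂, ha₂, b₂, hb₂, ha₂2, hb₂2, hx₂⟩ := objImage_decomp p q hy t O₂ z₂ hz₂
    have ha₁c : a₁.2 = c := ha₁2.trans hc₁
    have ha₂c : a₂.2 = c := ha₂2.trans hc₂
    have hb₁c : b₁.2 = c := hb₁2.trans hc₁
    have hb₂c : b₂.2 = c := hb₂2.trans hc₂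
    have hS : ∃ x : ℝ, (x, c) ∈ objImage G p O₁ := ⟨a₁.1, by rw [mk_fst_snd' ha₁c]; exact ha₁⟩
    have hT : ∃ x : ℝ, (x, c) ∈ objImage G p O₂ := ⟨a₂.1, by rw [mk_fst_snd' ha₂c]; exact ha₂⟩
    rcases trichotomy' (objImage_sliceConvex p O₁ c) (objImage_sliceConvex p O₂ c)
        hS hT hdisj with hL | hL
    · have hLq := (horder c O₁ O₂ hne).mp hL
      have h1 : a₁.1 < a₂.1 := hL.2.2 a₁ ha₁ ha₁c a₂ ha₂ ha₂c
      have h2 : b₁.1 < b₂.1 := hLq.2.2 b₁ hb₁ hb₁c b₂ hb₂ hb₂c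
      rw [hx₁, hx₂]
      exact ne_of_lt (comb_lt' ht0 ht1 h1 h2)
    · have hLq := (horder c O₂ O₁ hne.symm).mp hL
      have h1 : a₂.1 < a₁.1 := hL.2.2 a₂ ha₂ ha₂c a₁ ha₁ ha₁c
      have h2 : b₂.1 < b₁.1 := hLq.2.2 b₂ hb₂ hb₂c b₁ hb₁ hb₁c
      rw [hx₁, hx₂]
      exact ne_of_gt (comb_lt' ht0 ht1 h1 h2)
  have horizEnd : ∀ w u v : V, G.Adj w u → G.Adj w v → u ≠ v →
      (p u).2 = (p w).2 → (p v).2 = (p w).2 →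
      (p u).1 < (p w).1 → (p w).1 < (p v).1 →
      ∀ z, z ∈ segment ℝ (morphAt p q t w) (morphAt p q t u) →
        z ∈ segment ℝ (morphAt p q t w) (morphAt p q t v) → z = morphAt p q t w := by
    intro w u v hwu hwv huv hu2 hv2 hxu hxv z hz1 hz2
    have hqw2 : (q w).2 = (p w).2 := (hy w).symm
    have hqu2 : (q u).2 = (p w).2 := (hy u).symm.trans hu2
    have hqv2 : (q v).2 = (p w).2 := (hy v).symm.trans hv2
    have hL1 : LeftOfAt (p w).2 (objImage G p (Sum.inl u))
        (objImage G p (Sum.inr ⟨s(w,v), hwv⟩)) := by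
      refine ⟨⟨p u, rfl, hu2⟩, ⟨p w, left_mem_segment ℝ _ _, rfl⟩, ?_⟩
      intro s hs hsc t' ht' htc
      have hs' : s = p u := hs
      have ht'' : ((t'.1, (p w).2) : ℝ × ℝ) ∈ segment ℝ (p w) (p v) := by
        rw [mk_fst_snd' htc]; exact ht'
      have hmem := horiz_proj' ht''
      rw [segment_eq_Icc hxv.le] at hmem
      rw [hs']
      exact lt_of_lt_of_le hxu hmem.1
    have hq1 := (horder (p w).2 (Sum.inl u) (Sum.inr ⟨s(w,v), hwv⟩) (by simp)).mp hL1
    have hqx1 : (q u).1 < (q w).1 :=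
      hq1.2.2 (q u) rfl hqu2 (q w) (left_mem_segment ℝ _ _) hqw2
    have hL2 : LeftOfAt (p w).2 (objImage G p (Sum.inr ⟨s(w,u), hwu⟩))
        (objImage G p (Sum.inl v)) := by
      refine ⟨⟨p w, left_mem_segment ℝ _ _, rfl⟩, ⟨p v, rfl, hv2⟩, ?_⟩
      intro s hs hsc t' ht' htc
      have ht'' : t' = p v := ht'
      have hs'' : ((s.1, (p w).2) : ℝ × ℝ) ∈ segment ℝ (p w) (p u) := by
        rw [mk_fst_snd' hsc]; exact hs
      have hmem := horiz_proj' hs''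
      rw [segment_symm, segment_eq_Icc hxu.le] at hmem
      rw [ht'']
      exact lt_of_le_of_lt hmem.2 hxv
    have hq2 := (horder (p w).2 (Sum.inr ⟨s(w,u), hwu⟩) (Sum.inl v) (by simp)).mp hL2
    have hqx2 : (q w).1 < (q v).1 :=
      hq2.2.2 (q w) (left_mem_segment ℝ _ _) hqw2 (q v) rfl hqv2
    have hA : (morphAt p q t u).1 < (morphAt p q t w).1 := by
      rw [hP1 u, hP1 w]; exact comb_lt' ht0 ht1 hxu hqx1
    have hB : (morphAt p q t w).1 < (morphAt p q t v).1 := by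
      rw [hP1 w, hP1 v]; exact comb_lt' ht0 ht1 hxv hqx2
    have hPw2 : (morphAt p q t w).2 = (p w).2 := hP2 w
    have hPu2 : (morphAt p q t u).2 = (p w).2 := (hP2 u).trans hu2
    have hPv2 : (morphAt p q t v).2 = (p w).2 := (hP2 v).trans hv2
    have hz2c : z.2 = (p w).2 := seg_snd_const' hz1 hPw2 hPu2
    have hz1' : ((z.1, (p w).2) : ℝ × ℝ) ∈ segment ℝ (morphAt p q t w) (morphAt p q t u) := by
      rw [mk_fst_snd' hz2c]; exact hz1
    have hz2' : ((z.1, (p w).2) : ℝ × ℝ) ∈ segment ℝ (morphAt p q t w) (morphAt p q t v) := by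
      rw [mk_fst_snd' hz2c]; exact hz2
    have e1 := horiz_proj' hz1'
    rw [segment_symm, segment_eq_Icc hA.le] at e1
    have e2 := horiz_proj' hz2'
    rw [segment_eq_Icc hB.le] at e2
    have hzx : z.1 = (morphAt p q t w).1 := le_antisymm e1.2 e2.1
    have : z = ((morphAt p q t w).1, (p w).2) := by
      rw [← hzx]; exact (mk_fst_snd' hz2c).symm
    rw [this, ← hPw2]
  refine ⟨?_, ?_, ?_, ?_⟩
  · -- injectivity
    intro u v huvP
    by_contra hne
    have hd : ∀ x : ℝ, (x, (p u).2) ∈ objImage G p (Sum.inl u) →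
        (x, (p u).2) ∉ objImage G p (Sum.inl v) := by
      intro x hx1 hx2
      have e1 : ((x, (p u).2) : ℝ × ℝ) = p u := hx1
      have e2 : ((x, (p u).2) : ℝ × ℝ) = p v := hx2
      exact hne (hp.1 (e1.symm.trans e2))
    have h := key (p u).2 (Sum.inl u) (Sum.inl v) (by simp [hne]) hd
      (morphAt p q t u) rfl (morphAt p q t v) rfl (hP2 u) (by rw [← huvP]; exact hP2 u)
    exact h (congrArg Prod.fst huvP)
  · -- vertex not on edge
    intro u v w hadj hwu hwv hmem
    have hd : ∀ x : ℝ, (x, (p w).2) ∈ objImage G p (Sum.inl w) →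
        (x, (p w).2) ∉ objImage G p (Sum.inr ⟨s(u,v), hadj⟩) := by
      intro x hx1 hx2
      have e1 : ((x, (p w).2) : ℝ × ℝ) = p w := hx1
      have hx2' : ((x, (p w).2) : ℝ × ℝ) ∈ segment ℝ (p u) (p v) := hx2
      rw [e1] at hx2'
      exact hp.2.1 u v w hadj hwu hwv hx2'
    have h := key (p w).2 (Sum.inl w) (Sum.inr ⟨s(u,v), hadj⟩) (by simp) hd
      (morphAt p q t w) rfl (morphAt p q t w) hmem (hP2 w) (hP2 w)
    exact h rfl
  · -- disjoint edges
    intro u₁ v₁ u₂ v₂ had1 had2 h1 h2 h3 h4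
    rw [Set.disjoint_left]
    intro x hx1 hx2
    have hO : (Sum.inr ⟨s(u₁,v₁), had1⟩ : V ⊕ G.edgeSet) ≠ Sum.inr ⟨s(u₂,v₂), had2⟩ := by
      simp only [ne_eq, Sum.inr.injEq, Subtype.mk.injEq, Sym2.eq_iff]
      push_neg
      exact fun hh => (Sym2.eq_iff.mp (congrArg Subtype.val hh)).elim (fun h => h1 h.1) (fun h => h2 h.1)
    have hd : ∀ y : ℝ, (y, x.2) ∈ objImage G p (Sum.inr ⟨s(u₁,v₁), had1⟩) →
        (y, x.2) ∉ objImage G p (Sum.inr ⟨s(u₂,v₂), had2⟩) := by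
      intro y hy1 hy2
      exact Set.disjoint_left.mp
        (hp.2.2.1 u₁ v₁ u₂ v₂ had1 had2 h1 h2 h3 h4) hy1 hy2
    have h := key x.2 _ _ hO hd x hx1 x hx2 rfl rfl
    exact h rfl
  · -- shared endpoint
    intro w u v hwu hwv huv
    apply Set.Subset.antisymm
    · rintro z ⟨hz1, hz2⟩
      simp only [Set.mem_singleton_iff]
      by_cases hc : z.2 = (p w).2
      · by_cases hu2 : (p u).2 = (p w).2
        · by_cases hv2 : (p v).2 = (p w).2
          · -- fully horizontal configuration
            have hpuw : (p u).1 ≠ (p w).1 := by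
              intro hh
              exact hwu.ne' (hp.1 (Prod.ext_iff.mpr ⟨hh, hu2⟩))
            have hpvw : (p v).1 ≠ (p w).1 := by
              intro hh
              exact hwv.ne' (hp.1 (Prod.ext_iff.mpr ⟨hh, hv2⟩))
            have h1D : segment ℝ (p w).1 (p u).1 ∩ segment ℝ (p w).1 (p v).1
                = {(p w).1} := by
              ext x
              constructor
              · rintro ⟨hxa, hxb⟩
                have hxa' : ((x, (p w).2) : ℝ × ℝ) ∈ segment ℝ (p w) (p u) :=
                  (mem_horiz_segment' rfl hu2).mpr hxa
                have hxb' : ((x, (p w).2) : ℝ × ℝ) ∈ segment ℝ (p w) (p v) :=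
                  (mem_horiz_segment' rfl hv2).mpr hxb
                have hm : ((x, (p w).2) : ℝ × ℝ) ∈ ({p w} : Set (ℝ × ℝ)) := by
                  rw [← hp.2.2.2 w u v hwu hwv huv]; exact ⟨hxa', hxb'⟩
                simp only [Set.mem_singleton_iff] at hm
                simp only [Set.mem_singleton_iff]
                exact congrArg Prod.fst hm
              · intro hx
                simp only [Set.mem_singleton_iff] at hx
                subst hx
                exact ⟨left_mem_segment _ _ _, left_mem_segment _ _ _⟩
            rcases oneDim' hpuw hpvw h1D with ⟨ho1, ho2⟩ | ⟨ho1, ho2⟩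
            · exact horizEnd w u v hwu hwv huv hu2 hv2 ho1 ho2 z hz1 hz2
            · exact horizEnd w v u hwv hwu huv.symm hv2 hu2 ho1 ho2 z hz2 hz1
          · refine eq_endpoint_of_snd' hz2 ?_ ?_
            · rw [hP2 w]; exact hc
            · rw [hP2 v, hP2 w]; exact hv2
        · refine eq_endpoint_of_snd' hz1 ?_ ?_
          · rw [hP2 w]; exact hc
          · rw [hP2 u, hP2 w]; exact hu2
      · exfalso
        have hO : (Sum.inr ⟨s(w,u), hwu⟩ : V ⊕ G.edgeSet) ≠ Sum.inr ⟨s(w,v), hwv⟩ := by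
          simp only [ne_eq, Sum.inr.injEq, Subtype.mk.injEq, Sym2.eq_iff]
          push_neg
          exact fun hh => (Sym2.eq_iff.mp (congrArg Subtype.val hh)).elim (fun h => huv h.2) (fun h => huv (h.2.trans h.1))
        have hd : ∀ x : ℝ, (x, z.2) ∈ objImage G p (Sum.inr ⟨s(w,u), hwu⟩) →
            (x, z.2) ∉ objImage G p (Sum.inr ⟨s(w,v), hwv⟩) := by
          intro x hx1 hx2
          have hm : ((x, z.2) : ℝ × ℝ) ∈ ({p w} : Set (ℝ × ℝ)) := by
            rw [← hp.2.2.2 w u v hwu hwv huv]; exact ⟨hx1, hx2⟩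
          simp only [Set.mem_singleton_iff] at hm
          exact hc ((Prod.ext_iff.mp hm).2)
        have h := key z.2 _ _ hO hd z hz1 z hz2 rfl rfl
        exact h rfl
    · rw [Set.singleton_subset_iff]
      exact ⟨left_mem_segment ℝ _ _, left_mem_segment ℝ _ _⟩
end

section
/- Let G be a finite simple graph and let p₁, p₂, p₃ be three planar straight-line drawings of G such that the linear morphs ⟨p₁, p₂⟩ and ⟨p₂, p₃⟩ are both horizontal and planar. Then the linear morph ⟨p₁, p₃⟩ is horizontal and planar. -/
open Set


lemma hpm_sign_key {a b : ℝ} (h : ∀ s ∈ Icc (0:ℝ) 1, (1-s)*a + s*b ≠ 0) :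
    0 < a * b := by
  have ha : a ≠ 0 := by have := h 0 (by norm_num); simpa using this
  have hb : b ≠ 0 := by have := h 1 (by norm_num); simpa using this
  by_contra hab
  push_neg at hab
  have hab' : a * b < 0 := lt_of_le_of_ne hab (mul_ne_zero ha hb)
  have hcont : ContinuousOn (fun s : ℝ => (1-s)*a + s*b) (Icc 0 1) := by fun_prop
  rcases mul_neg_iff.mp hab' with ⟨ha', hb'⟩ | ⟨ha', hb'⟩
  · have := intermediate_value_Icc' (by norm_num : (0:ℝ) ≤ 1) hcont
      (by simp; constructor <;> linarith : (0:ℝ) ∈ Icc ((1-(1:ℝ))*a + 1*b) ((1-(0:ℝ))*a + 0*b))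
    obtain ⟨s, hs, hs0⟩ := this
    exact h s hs hs0
  · have := intermediate_value_Icc (by norm_num : (0:ℝ) ≤ 1) hcont
      (by simp; constructor <;> linarith : (0:ℝ) ∈ Icc ((1-(0:ℝ))*a + 0*b) ((1-(1:ℝ))*a + 1*b))
    obtain ⟨s, hs, hs0⟩ := this
    exact h s hs hs0

lemma hpm_sign_trans {a b c : ℝ}
    (h1 : ∀ s ∈ Icc (0:ℝ) 1, (1-s)*a + s*b ≠ 0)
    (h2 : ∀ s ∈ Icc (0:ℝ) 1, (1-s)*b + s*c ≠ 0) :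
    ∀ t ∈ Icc (0:ℝ) 1, (1-t)*a + t*c ≠ 0 := by
  have hab := hpm_sign_key h1
  have hbc := hpm_sign_key h2
  have hac : 0 < a * c := by nlinarith [mul_pos hab hbc, sq_nonneg b, sq_nonneg (a-c), sq_nonneg (a+c)]
  rintro t ⟨ht0, ht1⟩ h0
  have h0a : ((1-t)*a + t*c)*a = 0 := by rw [h0]; ring
  nlinarith [mul_nonneg (sub_nonneg.mpr ht1) (sq_nonneg a), mul_nonneg ht0 hac.le, sq_nonneg a]



lemma hpm_fst {V : Type*} (p q : V → ℝ × ℝ) (t : ℝ) (v : V) :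
    (morphAt p q t v).1 = (1-t)*(p v).1 + t*(q v).1 := by
  simp [morphAt, smul_eq_mul]

lemma hpm_snd {V : Type*} (p q : V → ℝ × ℝ) (t : ℝ) (v : V)
    (h : (p v).2 = (q v).2) : (morphAt p q t v).2 = (p v).2 := by
  simp [morphAt, smul_eq_mul, ← h]; ring

section
variable {V : Type*} {G : SimpleGraph V} {p q : V → ℝ × ℝ}

/-- case 1: injectivity -/
lemma hpm_c1 (hh : IsHorizontalMorph p q) (hpq : IsPlanarMorph G p q) {u v : V} (huv : u ≠ v) (hy : (p u).2 = (p v).2)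
    (s : ℝ) (hs : s ∈ Icc (0:ℝ) 1) :
    (morphAt p q s u).1 - (morphAt p q s v).1 ≠ 0 := by
  intro h0
  apply huv
  apply (hpq s hs).1
  have h2 : (morphAt p q s u).2 = (morphAt p q s v).2 := by
    rw [hpm_snd p q s u (hh u), hpm_snd p q s v (hh v), hy]
  exact Prod.ext (by linarith) h2

/-- case 2: vertex not on edge segment -/
lemma hpm_c2 (hh : IsHorizontalMorph p q) (hpq : IsPlanarMorph G p q) {u v w : V} (huv : G.Adj u v) (hwu : w ≠ u) (hwv : w ≠ v)
    {a b : ℝ} (ha : 0 ≤ a) (hb : 0 ≤ b) (hab : a + b = 1)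
    (hy : a*(p u).2 + b*(p v).2 = (p w).2)
    (s : ℝ) (hs : s ∈ Icc (0:ℝ) 1) :
    a*(morphAt p q s u).1 + b*(morphAt p q s v).1 - (morphAt p q s w).1 ≠ 0 := by
  intro h0
  refine (hpq s hs).2.1 u v w huv hwu hwv ⟨a, b, ha, hb, hab, ?_⟩
  apply Prod.ext
  · simp only [Prod.fst_add, Prod.smul_fst, smul_eq_mul]
    linarith
  · simp only [Prod.snd_add, Prod.smul_snd, smul_eq_mul,
      hpm_snd p q s u (hh u), hpm_snd p q s v (hh v), hpm_snd p q s w (hh w)]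
    exact hy

/-- case 3: disjointness of independent edges -/
lemma hpm_c3 (hh : IsHorizontalMorph p q) (hpq : IsPlanarMorph G p q) {u v w z : V} (huv : G.Adj u v) (hwz : G.Adj w z)
    (h1 : u ≠ w) (h2 : u ≠ z) (h3 : v ≠ w) (h4 : v ≠ z)
    {a b c d : ℝ} (ha : 0 ≤ a) (hb : 0 ≤ b) (hab : a + b = 1)
    (hc : 0 ≤ c) (hd : 0 ≤ d) (hcd : c + d = 1)
    (hy : a*(p u).2 + b*(p v).2 = c*(p w).2 + d*(p z).2)
    (s : ℝ) (hs : s ∈ Icc (0:ℝ) 1) :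
    a*(morphAt p q s u).1 + b*(morphAt p q s v).1
      - c*(morphAt p q s w).1 - d*(morphAt p q s z).1 ≠ 0 := by
  intro h0
  have hdisj := (hpq s hs).2.2.1 u v w z huv hwz h1 h2 h3 h4
  have heq : a • morphAt p q s u + b • morphAt p q s v
      = c • morphAt p q s w + d • morphAt p q s z := by
    apply Prod.ext
    · simp only [Prod.fst_add, Prod.smul_fst, smul_eq_mul]
      linarith
    · simp only [Prod.snd_add, Prod.smul_snd, smul_eq_mul,
        hpm_snd p q s u (hh u), hpm_snd p q s v (hh v), hpm_snd p q s w (hh w),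
        hpm_snd p q s z (hh z)]
      exact hy
  have hx1 : a • morphAt p q s u + b • morphAt p q s v
      ∈ segment ℝ (morphAt p q s u) (morphAt p q s v) := ⟨a, b, ha, hb, hab, rfl⟩
  have hx2 : a • morphAt p q s u + b • morphAt p q s v
      ∈ segment ℝ (morphAt p q s w) (morphAt p q s z) := ⟨c, d, hc, hd, hcd, heq.symm⟩
  exact Set.disjoint_left.mp hdisj hx1 hx2

/-- case 4: edges sharing endpoint w -/
lemma hpm_c4 (hh : IsHorizontalMorph p q) (hpq : IsPlanarMorph G p q) {w u v : V} (hwu : G.Adj w u) (hwv : G.Adj w v) (huv : u ≠ v)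
    {b d : ℝ} (hb : 0 < b) (hb1 : b ≤ 1) (hd : 0 < d) (hd1 : d ≤ 1)
    (hy : b*((p u).2 - (p w).2) = d*((p v).2 - (p w).2))
    (s : ℝ) (hs : s ∈ Icc (0:ℝ) 1) :
    b*(morphAt p q s u).1 - d*(morphAt p q s v).1
      - (b-d)*(morphAt p q s w).1 ≠ 0 := by
  intro h0
  have hXmem : (1-b) • morphAt p q s w + b • morphAt p q s u ∈
      segment ℝ (morphAt p q s w) (morphAt p q s u) ∩ segment ℝ (morphAt p q s w) (morphAt p q s v) := by
    constructor
    · exact ⟨1-b, b, by linarith, hb.le, by ring, rfl⟩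
    · refine ⟨1-d, d, by linarith, hd.le, by ring, ?_⟩
      symm
      apply Prod.ext
      · simp only [Prod.fst_add, Prod.smul_fst, smul_eq_mul]
        linarith
      · simp only [Prod.snd_add, Prod.smul_snd, smul_eq_mul,
          hpm_snd p q s u (hh u), hpm_snd p q s v (hh v), hpm_snd p q s w (hh w)]
        linarith
  rw [(hpq s hs).2.2.2 w u v hwu hwv huv] at hXmem
  have hXw : (1-b) • morphAt p q s w + b • morphAt p q s u = morphAt p q s w := hXmem
  have hmu : morphAt p q s u = morphAt p q s w := by
    have h1 : b • morphAt p q s u = b • morphAt p q s w := by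
      rw [sub_smul, one_smul] at hXw
      calc b • morphAt p q s u
          = (morphAt p q s w - b • morphAt p q s w + b • morphAt p q s u)
            - morphAt p q s w + b • morphAt p q s w := by abel
        _ = b • morphAt p q s w := by rw [hXw]; abel
    exact smul_right_injective (ℝ × ℝ) hb.ne' h1
  exact hwu.ne' ((hpq s hs).1 hmu)

end

/-- If the linear morphs `⟨p₁, p₂⟩` and `⟨p₂, p₃⟩` between planar straight-line drawings
of `G` are horizontal and planar, then the linear morph `⟨p₁, p₃⟩` is horizontal and
planar. -/
theorem horizontal_planar_morph_trans
    {V : Type*} [Fintype V] (G : SimpleGraph V) (p₁ p₂ p₃ : V → ℝ × ℝ)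
    (h1 : IsPlanarDrawing G p₁) (h2 : IsPlanarDrawing G p₂) (h3 : IsPlanarDrawing G p₃)
    (h12h : IsHorizontalMorph p₁ p₂) (h12p : IsPlanarMorph G p₁ p₂)
    (h23h : IsHorizontalMorph p₂ p₃) (h23p : IsPlanarMorph G p₂ p₃) :
    IsHorizontalMorph p₁ p₃ ∧ IsPlanarMorph G p₁ p₃ := by
  have h13h : IsHorizontalMorph p₁ p₃ := fun v => (h12h v).trans (h23h v)
  refine ⟨h13h, fun t ht => ⟨?_, ?_, ?_, ?_⟩⟩
  -- Condition 1 : injectivity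
  · intro u v hmeq
    by_contra huv
    have hy : (p₁ u).2 = (p₁ v).2 := by
      have := congrArg Prod.snd hmeq
      rwa [hpm_snd p₁ p₃ t u (h13h u), hpm_snd p₁ p₃ t v (h13h v)] at this
    have hy2 : (p₂ u).2 = (p₂ v).2 := by rw [← h12h, ← h12h]; exact hy
    have e : ∀ (r r' : V → ℝ × ℝ) (s : ℝ),
        (1-s)*((r u).1-(r v).1) + s*((r' u).1-(r' v).1)
        = (morphAt r r' s u).1 - (morphAt r r' s v).1 := by
      intro r r' s; simp only [hpm_fst]; ring
    refine hpm_sign_trans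
      (fun s hs => by rw [e]; exact hpm_c1 h12h h12p huv hy s hs)
      (fun s hs => by rw [e]; exact hpm_c1 h23h h23p huv hy2 s hs) t ht ?_
    rw [e, congrArg Prod.fst hmeq, sub_self]
  -- Condition 2 : no vertex on an edge segment
  · rintro u v w huv hwu hwv ⟨a, b, ha, hb, hab, heq⟩
    have hf := congrArg Prod.fst heq
    simp only [Prod.fst_add, Prod.smul_fst, smul_eq_mul] at hf
    have hy : a*(p₁ u).2 + b*(p₁ v).2 = (p₁ w).2 := by
      have := congrArg Prod.snd heq
      simp only [Prod.snd_add, Prod.smul_snd, smul_eq_mul,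
        hpm_snd p₁ p₃ t u (h13h u), hpm_snd p₁ p₃ t v (h13h v),
        hpm_snd p₁ p₃ t w (h13h w)] at this
      exact this
    have hy2 : a*(p₂ u).2 + b*(p₂ v).2 = (p₂ w).2 := by
      rw [← h12h, ← h12h, ← h12h]; exact hy
    have e : ∀ (r r' : V → ℝ × ℝ) (s : ℝ),
        (1-s)*(a*(r u).1 + b*(r v).1 - (r w).1)
          + s*(a*(r' u).1 + b*(r' v).1 - (r' w).1)
        = a*(morphAt r r' s u).1 + b*(morphAt r r' s v).1 - (morphAt r r' s w).1 := by
      intro r r' s; simp only [hpm_fst]; ring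
    refine hpm_sign_trans
      (fun s hs => by rw [e]; exact hpm_c2 h12h h12p huv hwu hwv ha hb hab hy s hs)
      (fun s hs => by rw [e]; exact hpm_c2 h23h h23p huv hwu hwv ha hb hab hy2 s hs) t ht ?_
    rw [e]; linarith
  -- Condition 3 : disjointness of independent edges
  · intro u v w z huv hwz hn1 hn2 hn3 hn4
    rw [Set.disjoint_left]
    rintro x ⟨a, b, ha, hb, hab, hx1⟩ ⟨c, d, hc, hd, hcd, hx2⟩
    have heq := hx1.trans hx2.symm
    have hf := congrArg Prod.fst heq
    simp only [Prod.fst_add, Prod.smul_fst, smul_eq_mul] at hf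
    have hy : a*(p₁ u).2 + b*(p₁ v).2 = c*(p₁ w).2 + d*(p₁ z).2 := by
      have := congrArg Prod.snd heq
      simp only [Prod.snd_add, Prod.smul_snd, smul_eq_mul,
        hpm_snd p₁ p₃ t u (h13h u), hpm_snd p₁ p₃ t v (h13h v),
        hpm_snd p₁ p₃ t w (h13h w), hpm_snd p₁ p₃ t z (h13h z)] at this
      exact this
    have hy2 : a*(p₂ u).2 + b*(p₂ v).2 = c*(p₂ w).2 + d*(p₂ z).2 := by
      rw [← h12h, ← h12h, ← h12h, ← h12h]; exact hy
    have e : ∀ (r r' : V → ℝ × ℝ) (s : ℝ),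
        (1-s)*(a*(r u).1 + b*(r v).1 - c*(r w).1 - d*(r z).1)
          + s*(a*(r' u).1 + b*(r' v).1 - c*(r' w).1 - d*(r' z).1)
        = a*(morphAt r r' s u).1 + b*(morphAt r r' s v).1
          - c*(morphAt r r' s w).1 - d*(morphAt r r' s z).1 := by
      intro r r' s; simp only [hpm_fst]; ring
    refine hpm_sign_trans
      (fun s hs => by
        rw [e]; exact hpm_c3 h12h h12p huv hwz hn1 hn2 hn3 hn4 ha hb hab hc hd hcd hy s hs)
      (fun s hs => by
        rw [e]; exact hpm_c3 h23h h23p huv hwz hn1 hn2 hn3 hn4 ha hb hab hc hd hcd hy2 s hs)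
      t ht ?_
    rw [e]; linarith
  -- Condition 4 : edges sharing an endpoint meet only there
  · intro w u v hwu hwv huv
    apply Set.Subset.antisymm
    · rintro x ⟨⟨a, b, ha, hb, hab, hx1⟩, ⟨c, d, hc, hd, hcd, hx2⟩⟩
      rcases hb.eq_or_lt with hb0 | hbpos
      · have : x = morphAt p₁ p₃ t w := by
          rw [← hx1, ← hb0]; simp [show a = 1 by linarith]
        simp [this]
      rcases hd.eq_or_lt with hd0 | hdpos
      · have : x = morphAt p₁ p₃ t w := by
          rw [← hx2, ← hd0]; simp [show c = 1 by linarith]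
        simp [this]
      exfalso
      have heq := hx1.trans hx2.symm
      have hf := congrArg Prod.fst heq
      simp only [Prod.fst_add, Prod.smul_fst, smul_eq_mul] at hf
      have hy : b*((p₁ u).2 - (p₁ w).2) = d*((p₁ v).2 - (p₁ w).2) := by
        have := congrArg Prod.snd heq
        simp only [Prod.snd_add, Prod.smul_snd, smul_eq_mul,
          hpm_snd p₁ p₃ t u (h13h u), hpm_snd p₁ p₃ t v (h13h v),
          hpm_snd p₁ p₃ t w (h13h w)] at this
        linear_combination this - (p₁ w).2 * hab + (p₁ w).2 * hcd
      have hy2 : b*((p₂ u).2 - (p₂ w).2) = d*((p₂ v).2 - (p₂ w).2) := by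
        rw [← h12h, ← h12h, ← h12h]; exact hy
      have e : ∀ (r r' : V → ℝ × ℝ) (s : ℝ),
          (1-s)*(b*(r u).1 - d*(r v).1 - (b-d)*(r w).1)
            + s*(b*(r' u).1 - d*(r' v).1 - (b-d)*(r' w).1)
          = b*(morphAt r r' s u).1 - d*(morphAt r r' s v).1
            - (b-d)*(morphAt r r' s w).1 := by
        intro r r' s; simp only [hpm_fst]; ring
      refine hpm_sign_trans
        (fun s hs => by
          rw [e]; exact hpm_c4 h12h h12p hwu hwv huv hbpos (by linarith) hdpos (by linarith) hy s hs)
        (fun s hs => by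
          rw [e]; exact hpm_c4 h23h h23p hwu hwv huv hbpos (by linarith) hdpos (by linarith) hy2 s hs)
        t ht ?_
      rw [e]
      linear_combination hf - (morphAt p₁ p₃ t w).1 * hab + (morphAt p₁ p₃ t w).1 * hcd
    · intro x hx
      simp only [Set.mem_singleton_iff] at hx
      subst hx
      exact ⟨left_mem_segment ℝ _ _, left_mem_segment ℝ _ _⟩
end

section
/- Let G be a finite simple graph and let p and q be planar straight-line drawings of G such that the linear morph ⟨p, q⟩ is horizontal and planar. Let e = {u, v} and f = {w, z} be two edges of G with no common endpoint, and let c ∈ ℝ satisfy (p u).2 < c < (p v).2 and (p w).2 < c < (p z).2 (so throughout the morph each of the two segments crosses the horizontal line y = c in exactly one point). If the crossing point of the segment of e with the line y = c has strictly smaller first coordinate than the crossing point of the segment of f with that line in the drawing p, then the same holds in the drawing q. In other words, a horizontal planar linear morph preserves the left-to-right order in which any fixed horizontal line crosses two disjoint edges. -/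
-- Auxiliary lemmas

lemma crossing_unique {A B s : ℝ × ℝ} {c : ℝ} (hA : A.2 < c) (hB : c < B.2)
    (hs : s ∈ segment ℝ A B) (hsc : s.2 = c) :
    s = (1 - (c - A.2)/(B.2 - A.2)) • A + ((c - A.2)/(B.2 - A.2)) • B := by
  obtain ⟨a, b, ha, hb, hab, rfl⟩ := hs
  have hBA : B.2 - A.2 ≠ 0 := by linarith
  have h2 : a * A.2 + b * B.2 = c := by simpa [Prod.add_def, Prod.smul_def] using hsc
  have hbval : b = (c - A.2)/(B.2 - A.2) := by
    rw [eq_div_iff hBA]; linear_combination h2 - A.2 * hab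
  have haval : a = 1 - (c - A.2)/(B.2 - A.2) := by rw [← hbval]; linarith
  rw [haval, hbval]

lemma crossing_mem {A B : ℝ × ℝ} {c : ℝ} (hA : A.2 < c) (hB : c < B.2) :
    (1 - (c - A.2)/(B.2 - A.2)) • A + ((c - A.2)/(B.2 - A.2)) • B ∈ segment ℝ A B := by
  have h1 : (0:ℝ) ≤ (c - A.2)/(B.2 - A.2) := div_nonneg (by linarith) (by linarith)
  have h2 : (c - A.2)/(B.2 - A.2) ≤ 1 := by
    rw [div_le_one (by linarith)]; linarith
  exact ⟨_, _, by linarith, h1, by ring, rfl⟩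

lemma crossing_snd {A B : ℝ × ℝ} {c : ℝ} (hA : A.2 < c) (hB : c < B.2) :
    ((1 - (c - A.2)/(B.2 - A.2)) • A + ((c - A.2)/(B.2 - A.2)) • B).2 = c := by
  have hBA : B.2 - A.2 ≠ 0 := by linarith
  simp only [Prod.add_def, Prod.smul_def, smul_eq_mul, Prod.snd]
  field_simp
  ring

/-- A horizontal planar linear morph preserves the left-to-right order in which a fixed
horizontal line `y = c` crosses two edges `e = {u,v}` and `f = {w,z}` sharing no
endpoint, provided the line strictly separates the endpoints of each edge (so that each
segment crosses the line in exactly one point throughout the morph). -/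
theorem horizontal_planar_morph_preserves_crossing_order
    {V : Type*} [Fintype V] (G : SimpleGraph V) (p q : V → ℝ × ℝ)
    (hp : IsPlanarDrawing G p) (hq : IsPlanarDrawing G q)
    (hhor : IsHorizontalMorph p q) (hplan : IsPlanarMorph G p q)
    (u v w z : V) (he : G.Adj u v) (hf : G.Adj w z)
    (huw : u ≠ w) (huz : u ≠ z) (hvw : v ≠ w) (hvz : v ≠ z)
    (c : ℝ)
    (hu : (p u).2 < c) (hv : c < (p v).2)
    (hw : (p w).2 < c) (hz : c < (p z).2)
    (hpc : ∀ s ∈ segment ℝ (p u) (p v), s.2 = c →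
      ∀ t ∈ segment ℝ (p w) (p z), t.2 = c → s.1 < t.1) :
    ∀ s ∈ segment ℝ (q u) (q v), s.2 = c →
      ∀ t ∈ segment ℝ (q w) (q z), t.2 = c → s.1 < t.1 := by
  intro s hs hsc t ht htc
  -- y-coordinates are preserved along the morph
  have hy : ∀ (r : ℝ) (x : V), (morphAt p q r x).2 = (p x).2 := by
    intro r x
    simp only [morphAt, Prod.add_def, Prod.smul_def, smul_eq_mul, Prod.snd, ← hhor x]
    ring
  set μe : ℝ := (c - (p u).2) / ((p v).2 - (p u).2) with hμe
  set μf : ℝ := (c - (p w).2) / ((p z).2 - (p w).2) with hμf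
  set Pe : ℝ → ℝ × ℝ := fun r => (1 - μe) • morphAt p q r u + μe • morphAt p q r v with hPe
  set Pf : ℝ → ℝ × ℝ := fun r => (1 - μf) • morphAt p q r w + μf • morphAt p q r z with hPf
  have hmemE : ∀ r : ℝ, Pe r ∈ segment ℝ (morphAt p q r u) (morphAt p q r v) := by
    intro r
    have := crossing_mem (A := morphAt p q r u) (B := morphAt p q r v) (c := c)
      (by rw [hy]; exact hu) (by rw [hy]; exact hv)
    simpa [hPe, hμe, hy] using this
  have hmemF : ∀ r : ℝ, Pf r ∈ segment ℝ (morphAt p q r w) (morphAt p q r z) := by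
    intro r
    have := crossing_mem (A := morphAt p q r w) (B := morphAt p q r z) (c := c)
      (by rw [hy]; exact hw) (by rw [hy]; exact hz)
    simpa [hPf, hμf, hy] using this
  have hsndE : ∀ r : ℝ, (Pe r).2 = c := by
    intro r
    have := crossing_snd (A := morphAt p q r u) (B := morphAt p q r v) (c := c)
      (by rw [hy]; exact hu) (by rw [hy]; exact hv)
    simpa [hPe, hμe, hy] using this
  have hsndF : ∀ r : ℝ, (Pf r).2 = c := by
    intro r
    have := crossing_snd (A := morphAt p q r w) (B := morphAt p q r z) (c := c)
      (by rw [hy]; exact hw) (by rw [hy]; exact hz)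
    simpa [hPf, hμf, hy] using this
  have hm0 : morphAt p q 0 = p := by funext x; simp [morphAt]
  have hm1 : morphAt p q 1 = q := by funext x; simp [morphAt]
  -- the difference of x-coordinates of the crossing points
  set g : ℝ → ℝ := fun r => (Pf r).1 - (Pe r).1 with hg
  have hgcont : Continuous g := by
    apply Continuous.sub
    · simp only [hPf, morphAt]; fun_prop
    · simp only [hPe, morphAt]; fun_prop
  have hg0 : 0 < g 0 := by
    have h1 := hmemE 0
    have h2 := hmemF 0
    rw [hm0] at h1 h2
    have := hpc (Pe 0) h1 (hsndE 0) (Pf 0) h2 (hsndF 0)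
    simpa [hg] using sub_pos.mpr this
  have hgne : ∀ r ∈ Set.Icc (0:ℝ) 1, g r ≠ 0 := by
    intro r hr hzero
    have heq : Pe r = Pf r := by
      ext
      · have : (Pf r).1 - (Pe r).1 = 0 := hzero
        linarith
      · rw [hsndE, hsndF]
    have hdisj := (hplan r hr).2.2.1 u v w z he hf huw huz hvw hvz
    exact Set.disjoint_left.mp hdisj (hmemE r) (heq ▸ hmemF r)
  have hg1 : 0 < g 1 := by
    rcases lt_or_ge 0 (g 1) with h | h
    · exact h
    · exfalso
      have h1 : g 1 < 0 := lt_of_le_of_ne h (hgne 1 (by norm_num))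
      have := intermediate_value_Icc' (by norm_num : (0:ℝ) ≤ 1) hgcont.continuousOn
      have h0mem : (0:ℝ) ∈ Set.Icc (g 1) (g 0) := ⟨le_of_lt h1, le_of_lt hg0⟩
      obtain ⟨r, hr, hr0⟩ := this h0mem
      exact hgne r hr hr0
  -- identify s and t with the crossing points at time 1
  have hqu2 : (q u).2 = (p u).2 := (hhor u).symm
  have hqv2 : (q v).2 = (p v).2 := (hhor v).symm
  have hqw2 : (q w).2 = (p w).2 := (hhor w).symm
  have hqz2 : (q z).2 = (p z).2 := (hhor z).symm
  have hsval : s = Pe 1 := by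
    have := crossing_unique (A := q u) (B := q v) (c := c)
      (by rw [hqu2]; exact hu) (by rw [hqv2]; exact hv) hs hsc
    rw [this, hPe]
    simp [hm1, hμe, hqu2, hqv2]
  have htval : t = Pf 1 := by
    have := crossing_unique (A := q w) (B := q z) (c := c)
      (by rw [hqw2]; exact hw) (by rw [hqz2]; exact hz) ht htc
    rw [this, hPf]
    simp [hm1, hμf, hqw2, hqz2]
  rw [hsval, htval]
  have : (Pf 1).1 - (Pe 1).1 = g 1 := rfl
  linarith
end

section
/- Let a, b, c, a′, b′, c′ ∈ ℝ² satisfy a.2 = a′.2, b.2 = b′.2 and c.2 = c′.2 (so each of the three points moves only horizontally). For t ∈ [0,1] put a_t = (1−t)·a + t·a′, b_t = (1−t)·b + t·b′, c_t = (1−t)·c + t·c′, and let f(t) = cross(a_t − b_t, c_t − b_t). Then f is an affine function of t. Consequently, for all 0 ≤ t₀ ≤ t ≤ t₁ ≤ 1: if f(t₀) ≥ 0 and f(t₁) ≥ 0 then f(t) ≥ 0, and if f(t₀) ≤ 0 and f(t₁) ≤ 0 then f(t) ≤ 0. In particular, during a horizontal linear morph the convexity status (convex or reflex) of the angle formed at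 b by the points a, b, c changes at most once, and if the angle is convex at the beginning and at the end of the morph then it is convex throughout. -/
/-- The planar cross product of two vectors in `ℝ²`. -/
def cross2 (u v : ℝ × ℝ) : ℝ := u.1 * v.2 - u.2 * v.1

/-- During a horizontal linear morph of three points `a`, `b`, `c` (each point keeps its
`y`-coordinate), the cross product `f t = cross((a_t - b_t), (c_t - b_t))` measuring the
convexity of the angle at `b` is an affine function of `t`. Consequently its sign changes
at most once: for `0 ≤ t₀ ≤ t ≤ t₁ ≤ 1`, if `f t₀` and `f t₁` are both nonnegative
(resp. nonpositive), then so is `f t`. In particular, if the angle at `b` is convex at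
the beginning and at the end of the morph then it is convex throughout. -/
theorem cross_affine_of_horizontal_morph
    (a b c a' b' c' : ℝ × ℝ)
    (ha : a.2 = a'.2) (hb : b.2 = b'.2) (hc : c.2 = c'.2)
    (f : ℝ → ℝ)
    (hf : ∀ t : ℝ, f t =
      cross2 (((1 - t) • a + t • a') - ((1 - t) • b + t • b'))
             (((1 - t) • c + t • c') - ((1 - t) • b + t • b'))) :
    (∃ α β : ℝ, ∀ t : ℝ, f t = α * t + β) ∧
    (∀ t₀ t t₁ : ℝ, 0 ≤ t₀ → t₀ ≤ t → t ≤ t₁ → t₁ ≤ 1 →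
      ((0 ≤ f t₀ → 0 ≤ f t₁ → 0 ≤ f t) ∧ (f t₀ ≤ 0 → f t₁ ≤ 0 → f t ≤ 0))) :=
  by
  have key : ∀ t : ℝ, f t =
      (((a'.1 - a.1) - (b'.1 - b.1)) * (c.2 - b.2)
        - (a.2 - b.2) * ((c'.1 - c.1) - (b'.1 - b.1))) * t
      + ((a.1 - b.1) * (c.2 - b.2) - (a.2 - b.2) * (c.1 - b.1)) := by
    intro t
    rw [hf]
    simp only [cross2, Prod.fst_add, Prod.snd_add, Prod.fst_sub, Prod.snd_sub,
      Prod.smul_fst, Prod.smul_snd, smul_eq_mul, ← ha, ← hb, ← hc]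
    ring
  obtain ⟨α, β, key⟩ : ∃ α β : ℝ, ∀ t : ℝ, f t = α * t + β := ⟨_, _, key⟩
  refine ⟨⟨α, β, key⟩, ?_⟩
  intro t₀ t t₁ h0 h01 h12 h2
  rcases le_or_gt 0 α with hα | hα
  · constructor
    · intro hA _; rw [key] at hA ⊢
      nlinarith [mul_nonneg hα (sub_nonneg.2 h01)]
    · intro _ hB; rw [key] at hB ⊢
      nlinarith [mul_nonneg hα (sub_nonneg.2 h12)]
  · constructor
    · intro _ hB; rw [key] at hB ⊢
      nlinarith [mul_nonpos_of_nonpos_of_nonneg hα.le (sub_nonneg.2 h12)]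
    · intro hA _; rw [key] at hA ⊢
      nlinarith [mul_nonpos_of_nonpos_of_nonneg hα.le (sub_nonneg.2 h01)]
end

section
/- Let c, b₁, b₂, a₁, a₂ ∈ ℝ² and let j be a real number with j ≥ 2. Suppose b₁.2 = b₂.2 = c.2 + 1, a₁.2 = a₂.2 = c.2 + j, b₁.1 < b₂.1 (b₁ is left of b₂), a₁.1 < a₂.1 (a₁ is left of a₂), cross(b₁ − c, a₁ − c) ≥ 0 (a₁ is not to the right of the oriented line from c through b₁), and cross(b₂ − c, a₂ − c) ≤ 0 (a₂ is not to the left of the oriented line from c through b₂). Let D = b₂.1 − b₁.1 be the distance between b₁ and b₂. Then the Euclidean distance between a₁ and a₂ is at least j·D. -/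
/-- Let `c` lie on level `k`, let `b₁` (left) and `b₂` (right) lie on level `k + 1`, and
let `a₁` (left) and `a₂` (right) lie on level `k + j` with `j ≥ 2`. If `a₁` is not to
the right of the oriented line from `c` through `b₁` and `a₂` is not to the left of the
oriented line from `c` through `b₂`, then the Euclidean distance between `a₁` and `a₂`
is at least `j` times the distance `D = b₂.1 - b₁.1` between `b₁` and `b₂`. -/
theorem level_distance_blowup
    (c b₁ b₂ a₁ a₂ : ℝ × ℝ) (j : ℝ) (hj : 2 ≤ j)
    (hb₁ : b₁.2 = c.2 + 1) (hb₂ : b₂.2 = c.2 + 1)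
    (ha₁ : a₁.2 = c.2 + j) (ha₂ : a₂.2 = c.2 + j)
    (hb : b₁.1 < b₂.1) (ha : a₁.1 < a₂.1)
    (h₁ : 0 ≤ cross2 (b₁ - c) (a₁ - c))
    (h₂ : cross2 (b₂ - c) (a₂ - c) ≤ 0) :
    j * (b₂.1 - b₁.1) ≤ Real.sqrt ((a₂.1 - a₁.1) ^ 2 + (a₂.2 - a₁.2) ^ 2) := by
  simp only [cross2, Prod.fst_sub, Prod.snd_sub] at h₁ h₂
  have hA : a₂.2 - a₁.2 = 0 := by rw [ha₁, ha₂]; ring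
  rw [hA]
  have : Real.sqrt ((a₂.1 - a₁.1) ^ 2 + 0 ^ 2) = a₂.1 - a₁.1 := by
    rw [show (0:ℝ)^2 = 0 by ring, add_zero, Real.sqrt_sq (by linarith)]
  rw [this]
  rw [hb₁] at h₁; rw [hb₂] at h₂; rw [ha₁] at h₁; rw [ha₂] at h₂
  nlinarith [h₁, h₂, hj, hb]
end

section
/- Let G be a finite 2-connected simple graph on vertex set V, let C be a cycle in G, and let W be the vertex set of C. Suppose G has property (I3) with respect to W: for every vertex w ∉ W there exist three paths in G from w to vertices of W that pairwise intersect only in the vertex w and each of which meets W only in its final endpoint. Then every separation pair {p, q} of G is W-external: p ∈ W, q ∈ W, and every connected component of the subgraph induced on V ∖ {p, q} contains a vertex of W. -/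
/-- Property (I3) of a graph `G` with respect to a vertex set `W`: from every vertex
`w ∉ W` there exist three paths in `G` from `w` to vertices of `W` that pairwise
intersect only in the vertex `w`, each of which meets `W` only in its final endpoint. -/
def PropI3 {V : Type*} (G : SimpleGraph V) (W : Set V) : Prop :=
  ∀ w : V, w ∉ W →
    ∃ (a b c : V) (P₁ : G.Walk w a) (P₂ : G.Walk w b) (P₃ : G.Walk w c),
      a ∈ W ∧ b ∈ W ∧ c ∈ W ∧
      P₁.IsPath ∧ P₂.IsPath ∧ P₃.IsPath ∧
      (∀ x ∈ P₁.support, x ∈ W → x = a) ∧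
      (∀ x ∈ P₂.support, x ∈ W → x = b) ∧
      (∀ x ∈ P₃.support, x ∈ W → x = c) ∧
      (∀ x ∈ P₁.support, x ∈ P₂.support → x = w) ∧
      (∀ x ∈ P₁.support, x ∈ P₃.support → x = w) ∧
      (∀ x ∈ P₂.support, x ∈ P₃.support → x = w)

/-- A finite simple graph is 2-connected if it has at least 3 vertices and deleting any
single vertex leaves a connected induced subgraph. -/
def TwoConnected {V : Type*} [Fintype V] (G : SimpleGraph V) : Prop :=
  3 ≤ Fintype.card V ∧
  ∀ v : V, (G.induce {z | z ≠ v}).Connected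

/-- A pair of distinct vertices is a separation pair if deleting both vertices leaves a
disconnected induced subgraph. -/
def IsSeparationPair {V : Type*} (G : SimpleGraph V) (p q : V) : Prop :=
  p ≠ q ∧ ¬ (G.induce {z | z ≠ p ∧ z ≠ q}).Connected

open SimpleGraph

section Aux

variable {V : Type*} {G : SimpleGraph V}

/-- A walk whose support lies in `s` yields reachability in the induced graph. -/
lemma reachable_induce_aux (s : Set V) {u v : V} (P : G.Walk u v)
    (hs : ∀ z ∈ P.support, z ∈ s) (hu : u ∈ s) (hv : v ∈ s) :
    (G.induce s).Reachable ⟨u, hu⟩ ⟨v, hv⟩ := by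
  induction P with
  | nil => exact Reachable.refl _
  | @cons u b v h Q ih =>
    have hb : b ∈ s := hs b (by simp)
    have hadj : (G.induce s).Adj ⟨u, hu⟩ ⟨b, hb⟩ := h
    exact hadj.reachable.trans (ih (fun z hz => hs z (by simp [hz])) hb hv)

lemma end_not_mem_takeUntil [DecidableEq V] {s t x : V} (P : G.Walk s t)
    (hP : P.IsPath) (hx : x ∈ P.support) (hxt : x ≠ t) :
    t ∉ (P.takeUntil x hx).support := by
  intro ht
  have hnd : P.support.Nodup := hP.support_nodup
  rw [← P.take_spec hx, Walk.support_append] at hnd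
  have hdisj := List.disjoint_of_nodup_append hnd
  have ht2 : t ∈ (P.dropUntil x hx).support.tail := by
    have h1 := (P.dropUntil x hx).support_eq_cons
    have h2 : t ∈ (P.dropUntil x hx).support := Walk.end_mem_support _
    rw [h1] at h2
    rcases List.mem_cons.mp h2 with h2 | h2
    · exact absurd h2.symm hxt
    · exact h2
  exact hdisj ht ht2

lemma cycle_avoid [DecidableEq V] {u : V} (C : G.Walk u u)
    (hC : C.IsCycle) {x y : V} (hx : x ∈ C.support) (hy : y ∈ C.support)
    (hxu : x ≠ u) (hyu : y ≠ u) :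
    ∃ Q : G.Walk x y, (∀ z ∈ Q.support, z ∈ C.support) ∧ u ∉ Q.support := by
  match C, hC, hx, hy with
  | .nil, hC, _, _ => exact absurd rfl hC.ne_nil
  | .cons hadj P, hC, hx, hy =>
    have hnd : P.support.Nodup := by
      have := hC.support_nodup
      rwa [Walk.support_cons, List.tail_cons] at this
    have hP : P.IsPath := Walk.IsPath.mk' hnd
    have hx' : x ∈ P.support := by
      rw [Walk.support_cons] at hx
      rcases List.mem_cons.mp hx with hx | hx
      · exact absurd hx hxu
      · exact hx
    have hy' : y ∈ P.support := by
      rw [Walk.support_cons] at hy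
      rcases List.mem_cons.mp hy with hy | hy
      · exact absurd hy hyu
      · exact hy
    refine ⟨(P.takeUntil x hx').reverse.append (P.takeUntil y hy'), ?_, ?_⟩
    · intro z hz
      rw [Walk.mem_support_append_iff] at hz
      have hz' : z ∈ P.support := by
        rcases hz with hz | hz
        · rw [Walk.support_reverse, List.mem_reverse] at hz
          exact P.support_takeUntil_subset hx' hz
        · exact P.support_takeUntil_subset hy' hz
      rw [Walk.support_cons]
      exact List.mem_cons_of_mem _ hz'
    · intro hu2
      rw [Walk.mem_support_append_iff] at hu2
      rcases hu2 with hu2 | hu2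
      · rw [Walk.support_reverse, List.mem_reverse] at hu2
        exact end_not_mem_takeUntil P hP hx' hxu hu2
      · exact end_not_mem_takeUntil P hP hy' hyu hu2

lemma end_mem_tail_support {u v : V} (C : G.Walk u v) (hn : ¬ C.Nil) :
    v ∈ C.support.tail := by
  cases C with
  | nil => exact absurd Walk.Nil.nil hn
  | cons hadj P => simpa using P.end_mem_support

lemma mem_support_rotate_iff [DecidableEq V] {v₀ u z : V} (C : G.Walk v₀ v₀)
    (hn : ¬ C.Nil) (h : u ∈ C.support) :
    z ∈ (C.rotate u h).support ↔ z ∈ C.support := by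
  have hrot := C.support_rotate u h
  constructor
  · intro hz
    rw [(C.rotate u h).support_eq_cons] at hz
    rcases List.mem_cons.mp hz with rfl | hz
    · exact h
    · exact List.mem_of_mem_tail (hrot.mem_iff.mp hz)
  · intro hz
    rw [C.support_eq_cons] at hz
    rcases List.mem_cons.mp hz with rfl | hz
    · exact List.mem_of_mem_tail (hrot.mem_iff.mpr (end_mem_tail_support C hn))
    · exact List.mem_of_mem_tail (hrot.mem_iff.mpr hz)

/-- In a cycle, any two vertices different from `r` are joined by a walk inside the
cycle avoiding `r`. -/
lemma cycle_connect [DecidableEq V] {v₀ : V} (C : G.Walk v₀ v₀) (hC : C.IsCycle)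
    (r : V) {x y : V} (hx : x ∈ C.support) (hy : y ∈ C.support)
    (hxr : x ≠ r) (hyr : y ≠ r) :
    ∃ Q : G.Walk x y, (∀ z ∈ Q.support, z ∈ C.support) ∧ r ∉ Q.support := by
  have hn : ¬ C.Nil := hC.not_nil
  by_cases hr : r ∈ C.support
  · obtain ⟨Q, hQ, hQr⟩ := cycle_avoid (C.rotate r hr) (hC.rotate hr)
      ((mem_support_rotate_iff C hn hr).mpr hx)
      ((mem_support_rotate_iff C hn hr).mpr hy) hxr hyr
    exact ⟨Q, fun z hz => (mem_support_rotate_iff C hn hr).mp (hQ z hz), hQr⟩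
  · have hy' : y ∈ (C.rotate x hx).support := (mem_support_rotate_iff C hn hx).mpr hy
    refine ⟨(C.rotate x hx).takeUntil y hy', ?_, ?_⟩
    · intro z hz
      exact (mem_support_rotate_iff C hn hx).mp
        ((C.rotate x hx).support_takeUntil_subset hy' hz)
    · intro hrm
      exact hr ((mem_support_rotate_iff C hn hx).mp
        ((C.rotate x hx).support_takeUntil_subset hy' hrm))

end Aux

/-- If `G` is 2-connected and has property (I3) with respect to the vertex set `W` of a
cycle `C` of `G`, then every separation pair `{p, q}` of `G` is `W`-external: both `p`
and `q` lie in `W` and every connected component of the subgraph induced on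
`V ∖ {p, q}` contains a vertex of `W`. -/
theorem separation_pair_external_of_propI3
    {V : Type*} [Fintype V] (G : SimpleGraph V) (h2 : TwoConnected G)
    (v₀ : V) (C : G.Walk v₀ v₀) (hC : C.IsCycle)
    (W : Set V) (hW : W = {x | x ∈ C.support})
    (hI3 : PropI3 G W)
    (p q : V) (hsep : IsSeparationPair G p q) :
    p ∈ W ∧ q ∈ W ∧
    ∀ x : {z : V // z ≠ p ∧ z ≠ q},
      ∃ y : {z : V // z ≠ p ∧ z ≠ q}, (y : V) ∈ W ∧
        (G.induce {z | z ≠ p ∧ z ≠ q}).Reachable x y := by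
  classical
  obtain ⟨hpq, hdis⟩ := hsep
  -- Claim: every vertex of the punctured graph reaches a vertex of `W` there.
  have claim3 : ∀ x : {z : V // z ≠ p ∧ z ≠ q},
      ∃ y : {z : V // z ≠ p ∧ z ≠ q}, (y : V) ∈ W ∧
        (G.induce {z | z ≠ p ∧ z ≠ q}).Reachable x y := by
    rintro ⟨x, hxp, hxq⟩
    by_cases hxW : x ∈ W
    · exact ⟨⟨x, hxp, hxq⟩, hxW, Reachable.refl _⟩
    obtain ⟨a, b, c, P₁, P₂, P₃, haW, hbW, hcW, hP1, hP2, hP3, _, _, _, h12, h13, h23⟩ :=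
      hI3 x hxW
    have pick : ∃ (d : V) (P : G.Walk x d), d ∈ W ∧ p ∉ P.support ∧ q ∉ P.support := by
      by_cases h1 : p ∉ P₁.support ∧ q ∉ P₁.support
      · exact ⟨a, P₁, haW, h1.1, h1.2⟩
      by_cases h2' : p ∉ P₂.support ∧ q ∉ P₂.support
      · exact ⟨b, P₂, hbW, h2'.1, h2'.2⟩
      by_cases h3 : p ∉ P₃.support ∧ q ∉ P₃.support
      · exact ⟨c, P₃, hcW, h3.1, h3.2⟩
      exfalso
      rw [not_and_or, not_not, not_not] at h1 h2' h3
      rcases h1 with h1 | h1 <;> rcases h2' with h2' | h2' <;> rcases h3 with h3 | h3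
      · exact hxp (h12 p h1 h2').symm
      · exact hxp (h12 p h1 h2').symm
      · exact hxp (h13 p h1 h3).symm
      · exact hxq (h23 q h2' h3).symm
      · exact hxp (h23 p h2' h3).symm
      · exact hxq (h13 q h1 h3).symm
      · exact hxq (h12 q h1 h2').symm
      · exact hxq (h12 q h1 h2').symm
    obtain ⟨d, P, hdW, hPp, hPq⟩ := pick
    have hsupp : ∀ z ∈ P.support, z ∈ {z : V | z ≠ p ∧ z ≠ q} := fun z hz =>
      ⟨fun e => hPp (e ▸ hz), fun e => hPq (e ▸ hz)⟩
    exact ⟨⟨d, hsupp d P.end_mem_support⟩, hdW,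
      reachable_induce_aux _ P hsupp ⟨hxp, hxq⟩ _⟩
  -- Nonemptiness of the punctured vertex set.
  have hne : Nonempty {z : V // z ≠ p ∧ z ≠ q} := by
    by_contra h
    have hall : ∀ z : V, z ≠ p → z = q := by
      intro z hzp
      by_contra hzq
      exact h ⟨⟨z, hzp, hzq⟩⟩
    have hsub : (Finset.univ : Finset V) ⊆ {p, q} := by
      intro z _
      rcases eq_or_ne z p with rfl | hz
      · simp
      · simp [hall z hz]
    have h1 : Fintype.card V ≤ ({p, q} : Finset V).card := by
      rw [← Finset.card_univ]; exact Finset.card_le_card hsub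
    have h2' : ({p, q} : Finset V).card ≤ 2 :=
      (Finset.card_insert_le _ _).trans (by simp)
    have h3 := h2.1
    omega
  -- If one of `p`, `q` misses the cycle then deleting both leaves it connected.
  have key : ¬ (p ∉ C.support ∨ q ∉ C.support) := by
    intro hout
    apply hdis
    rw [connected_iff]
    refine ⟨?_, hne⟩
    intro x y
    obtain ⟨wx, hwxW, hxwx⟩ := claim3 x
    obtain ⟨wy, hwyW, hywy⟩ := claim3 y
    have hwx : (wx : V) ∈ C.support := by rw [hW] at hwxW; exact hwxW
    have hwy : (wy : V) ∈ C.support := by rw [hW] at hwyW; exact hwyW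
    rcases hout with hp | hq
    · obtain ⟨Q, hQsub, hQq⟩ := cycle_connect C hC q hwx hwy wx.2.2 wy.2.2
      have hsupp : ∀ z ∈ Q.support, z ∈ {z : V | z ≠ p ∧ z ≠ q} := fun z hz =>
        ⟨fun e => hp (e ▸ hQsub z hz), fun e => hQq (e ▸ hz)⟩
      exact hxwx.trans ((reachable_induce_aux _ Q hsupp wx.2 wy.2).trans hywy.symm)
    · obtain ⟨Q, hQsub, hQp⟩ := cycle_connect C hC p hwx hwy wx.2.1 wy.2.1
      have hsupp : ∀ z ∈ Q.support, z ∈ {z : V | z ≠ p ∧ z ≠ q} := fun z hz =>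
        ⟨fun e => hQp (e ▸ hz), fun e => hq (e ▸ hQsub z hz)⟩
      exact hxwx.trans ((reachable_induce_aux _ Q hsupp wx.2 wy.2).trans hywy.symm)
  push_neg at key
  refine ⟨?_, ?_, claim3⟩
  · rw [hW]; exact key.1
  · rw [hW]; exact key.2
end

section
/- Let G be a finite 2-connected simple graph on vertex set V, let C be a cycle in G with vertex set W, and let {u, v} be a separation pair of G. Then the following are equivalent. (a) u ∈ W, v ∈ W, and every connected component of the subgraph induced on V ∖ {u, v} contains a vertex of W. (b) All of the following hold: u, v ∈ W; the cycle C decomposes into two internally disjoint paths (u, w₁, …, w_j, v) and (v, w′₁, …, w′_ℓ, u) with j ≥ 1 and ℓ ≥ 1 (so each of the two arcs of C between u and v has at least one interior vertex); the vertices w₁, …, w_j all lie in one connected component C₁ of the subgraph induced on V ∖ {u, v}; the vertices w′₁, …, w′_ℓ all lie in a connected component C₂ of that subgraph; C₁ ≠ C₂; and the subgraph induced on V ∖ {u, v} has no connected component other than C₁ and C₂. -/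
/-- Every connected component of the graph induced on `V ∖ {u, v}` contains a vertex of
`W`. -/
def AllComponentsMeet {V : Type*} (G : SimpleGraph V) (W : Set V) (u v : V) : Prop :=
  ∀ x : {z : V // z ≠ u ∧ z ≠ v},
    ∃ y : {z : V // z ≠ u ∧ z ≠ v}, (y : V) ∈ W ∧
      (G.induce {z | z ≠ u ∧ z ≠ v}).Reachable x y

section Aux

open SimpleGraph Walk

variable {V : Type*} {G : SimpleGraph V}

lemma end_mem_support_tail {a b : V} (p : G.Walk a b) (h : ¬ p.Nil) : b ∈ p.support.tail := by
  cases p with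
  | nil => simp at h
  | cons h' q => simpa using q.end_mem_support

lemma reach_from_head {S : Set V} : ∀ {a b : V} (p : G.Walk a b), p.IsPath →
    (∀ z ∈ p.support, z = a ∨ z = b ∨ z ∈ S) → (haS : a ∈ S) →
    ∀ y (hy : y ∈ p.support) (hyS : y ∈ S),
    (G.induce S).Reachable ⟨a, haS⟩ ⟨y, hyS⟩ := by
  intro a b p
  induction p with
  | nil =>
    intro _ _ haS y hy hyS
    simp only [support_nil, List.mem_singleton] at hy
    subst hy; rfl
  | @cons a c b hadj q ih =>
    intro hp hcond haS y hy hyS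
    rcases List.mem_cons.mp (by simpa using hy) with rfl | hy'
    · rfl
    have haq : a ∉ q.support := by
      have := hp.support_nodup
      simp only [support_cons, List.nodup_cons] at this
      exact this.1
    have hq : q.IsPath := hp.of_cons
    by_cases hcS : c ∈ S
    · have hcond' : ∀ z ∈ q.support, z = c ∨ z = b ∨ z ∈ S := by
        intro z hz
        rcases hcond z (by simp [hz]) with rfl | h | h
        · exact absurd hz haq
        · exact Or.inr (Or.inl h)
        · exact Or.inr (Or.inr h)
      have step : (G.induce S).Adj ⟨a, haS⟩ ⟨c, hcS⟩ := by
        exact hadj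
      exact (step.reachable).trans (ih hq hcond' hcS y hy' hyS)
    · have hca : c ≠ a := fun h => haq (h ▸ q.start_mem_support)
      rcases hcond c (by simp) with h | rfl | h
      · exact absurd h hca
      · have hnil : q.Nil := by
          by_contra hnil
          have hc := end_mem_support_tail q hnil
          have := hq.support_nodup
          rw [q.support_eq_cons, List.nodup_cons] at this
          exact this.1 hc
        rw [Walk.nil_iff_support_eq] at hnil
        rw [hnil, List.mem_singleton] at hy'
        exact absurd (hy' ▸ hyS) hcS
      · exact absurd h hcS

lemma reach_in_induced {S : Set V} {a b : V} (p : G.Walk a b) (hp : p.IsPath)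
    (hcond : ∀ z ∈ p.support, z = a ∨ z = b ∨ z ∈ S)
    {x y : V} (hx : x ∈ p.support) (hy : y ∈ p.support) (hxS : x ∈ S) (hyS : y ∈ S) :
    (G.induce S).Reachable ⟨x, hxS⟩ ⟨y, hyS⟩ := by
  classical
  have hsplit : (p.takeUntil x hx).append (p.dropUntil x hx) = p := p.take_spec hx
  have hnd : p.support.Nodup := hp.support_nodup
  have hsupp : p.support = (p.takeUntil x hx).support ++ (p.dropUntil x hx).support.tail := by
    conv_lhs => rw [← hsplit]
    exact support_append _ _
  have hdisj : ∀ z, z ∈ (p.takeUntil x hx).support →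
      z ∈ (p.dropUntil x hx).support.tail → False := by
    rw [hsupp] at hnd
    intro z h1 h2
    exact (List.disjoint_of_nodup_append hnd) h1 h2
  rcases (by rw [hsupp] at hy; exact List.mem_append.mp hy) with hy1 | hy2
  · set q := (p.takeUntil x hx).reverse with hq
    have hqp : q.IsPath := (hp.takeUntil hx).reverse
    have hyq : y ∈ q.support := by rw [hq, support_reverse, List.mem_reverse]; exact hy1
    have hcond' : ∀ z ∈ q.support, z = x ∨ z = a ∨ z ∈ S := by
      intro z hz
      rw [hq, support_reverse, List.mem_reverse] at hz
      rcases hcond z (by rw [hsupp]; exact List.mem_append.mpr (Or.inl hz)) with h | rfl | h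
      · exact Or.inr (Or.inl h)
      · by_cases hbx : z = x
        · exact Or.inl hbx
        · exfalso
          have hbd : z ∈ (p.dropUntil x hx).support.tail :=
            end_mem_support_tail _ (Walk.not_nil_of_ne (fun h => hbx h.symm))
          exact hdisj z hz hbd
      · exact Or.inr (Or.inr h)
    exact reach_from_head q hqp hcond' hxS y hyq hyS
  · set r := p.dropUntil x hx with hr
    have hrp : r.IsPath := hp.dropUntil hx
    have hyr : y ∈ r.support := List.mem_of_mem_tail hy2
    have hcond' : ∀ z ∈ r.support, z = x ∨ z = b ∨ z ∈ S := by
      intro z hz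
      rcases hcond z ((support_dropUntil_subset p hx) hz) with rfl | h | h
      · by_cases hzx : z = x
        · exact Or.inl hzx
        · exfalso
          have : z ∈ r.support.tail := by
            rw [r.support_eq_cons] at hz
            rcases List.mem_cons.mp hz with h' | h'
            · exact absurd h' hzx
            · exact h'
          exact hdisj z (p.takeUntil x hx).start_mem_support this
      · exact Or.inr (Or.inl h)
      · exact Or.inr (Or.inr h)
    exact reach_from_head r hrp hcond' hxS y hyr hyS

lemma mem_support_closed_iff {c z : V} (p : G.Walk c c) (hnn : ¬ p.Nil) :
    z ∈ p.support ↔ z ∈ p.support.tail := by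
  constructor
  · intro h
    rw [p.support_eq_cons, List.mem_cons] at h
    rcases h with rfl | h
    · exact end_mem_support_tail p hnn
    · exact h
  · exact List.mem_of_mem_tail

lemma not_nil_rotate [DecidableEq V] {c a : V} (p : G.Walk c c) (hnn : ¬ p.Nil)
    (h : a ∈ p.support) : ¬ (p.rotate a h).Nil := by
  intro hn
  rw [Walk.nil_iff_support_eq] at hn
  have hlen := (Walk.support_rotate p a h).perm.length_eq
  rw [hn] at hlen
  have hne : p.support.tail ≠ [] := List.ne_nil_of_mem (end_mem_support_tail p hnn)
  simp only [List.tail_cons, List.length_nil] at hlen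
  exact hne (List.length_eq_zero_iff.mp hlen.symm)

lemma mem_support_rotate_iff_s8 [DecidableEq V] {c a z : V} (p : G.Walk c c) (hnn : ¬ p.Nil)
    (h : a ∈ p.support) : z ∈ (p.rotate a h).support ↔ z ∈ p.support := by
  rw [mem_support_closed_iff _ (not_nil_rotate p hnn h),
    (Walk.support_rotate p a h).mem_iff, ← mem_support_closed_iff p hnn]

lemma exists_interior {a b : V} (p : G.Walk a b) (hp : p.IsPath) (h2 : 2 ≤ p.length) :
    ∃ c, c ∈ p.support ∧ c ≠ a ∧ c ≠ b := by
  cases p with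
  | nil => simp at h2
  | @cons _ c _ hadj q =>
    have hca : c ≠ a := hadj.ne'
    have hcb : c ≠ b := by
      rintro rfl
      have hq : q.IsPath := hp.of_cons
      have hqn : ¬ q.Nil := by
        rw [Walk.not_nil_iff_lt_length]
        simp only [Walk.length_cons] at h2
        omega
      have hc := end_mem_support_tail q hqn
      have hnd := hq.support_nodup
      rw [q.support_eq_cons, List.nodup_cons] at hnd
      exact hnd.1 hc
    exact ⟨c, by simp, hca, hcb⟩

lemma support_subset_of_edges_subset {a b a' b' : V} (p : G.Walk a b) (q : G.Walk a' b')
    (hnn : ¬ p.Nil) (h : ∀ e ∈ p.edges, e ∈ q.edges) : ∀ z ∈ p.support, z ∈ q.support := by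
  induction p with
  | nil => simp at hnn
  | @cons a₁ c b₁ hadj r ih =>
    intro z hz
    rcases List.mem_cons.mp (by simpa using hz) with rfl | hz'
    · exact q.fst_mem_support_of_mem_edges (show s(z, c) ∈ q.edges from h _ (by simp))
    · by_cases hr : r.Nil
      · have := Walk.nil_iff_support_eq.mp hr
        rw [this, List.mem_singleton] at hz'
        subst hz'
        exact q.snd_mem_support_of_mem_edges (show s(a₁, z) ∈ q.edges from h _ (by simp))
      · exact ih hr (fun e he => h e (by simp [he])) z hz'

end Aux

/-- Characterization of external separation pairs of a 2-connected plane graph with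
outer cycle `C` (with vertex set `W`). A separation pair `{u, v}` is `W`-external,
i.e. `u, v ∈ W` and every component of the graph induced on `V ∖ {u, v}` meets `W`,
if and only if: `u, v ∈ W`; the cycle `C` decomposes into two internally disjoint paths
`P` from `u` to `v` and `Q` from `v` to `u`, each with at least one interior vertex;
all interior vertices of `P` lie in one component `K₁` of the graph induced on
`V ∖ {u, v}`; all interior vertices of `Q` lie in a component `K₂`; `K₁ ≠ K₂`; and
there are no components other than `K₁` and `K₂`. -/
theorem external_separation_pair_characterization
    {V : Type*} [Fintype V] [DecidableEq V] (G : SimpleGraph V) (h2 : TwoConnected G)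
    (v₀ : V) (C : G.Walk v₀ v₀) (hC : C.IsCycle)
    (W : Set V) (hW : W = {x | x ∈ C.support})
    (u v : V) (hsep : IsSeparationPair G u v) :
    (u ∈ W ∧ v ∈ W ∧ AllComponentsMeet G W u v)
    ↔
    (u ∈ W ∧ v ∈ W ∧
      ∃ (P : G.Walk u v) (Q : G.Walk v u),
        P.IsPath ∧ Q.IsPath ∧
        2 ≤ P.length ∧ 2 ≤ Q.length ∧
        {x | x ∈ P.support} ∩ {x | x ∈ Q.support} = {u, v} ∧
        (P.edges ++ Q.edges).Perm C.edges ∧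
        ∃ K₁ K₂ : (G.induce {z | z ≠ u ∧ z ≠ v}).ConnectedComponent,
          K₁ ≠ K₂ ∧
          (∀ x (hxu : x ≠ u) (hxv : x ≠ v), x ∈ P.support →
            (G.induce {z | z ≠ u ∧ z ≠ v}).connectedComponentMk ⟨x, hxu, hxv⟩ = K₁) ∧
          (∀ x (hxu : x ≠ u) (hxv : x ≠ v), x ∈ Q.support →
            (G.induce {z | z ≠ u ∧ z ≠ v}).connectedComponentMk ⟨x, hxu, hxv⟩ = K₂) ∧
          (∀ K : (G.induce {z | z ≠ u ∧ z ≠ v}).ConnectedComponent, K = K₁ ∨ K = K₂)) := by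
  classical
  open SimpleGraph Walk in
  obtain ⟨hne, hdisc⟩ := hsep
  subst hW
  have hVne : ∃ z : V, z ≠ u ∧ z ≠ v := by
    by_contra hcon
    push_neg at hcon
    have hsub : (Finset.univ : Finset V) ⊆ {u, v} := by
      intro z _
      by_cases hz : z = u
      · simp [hz]
      · simp [hcon z hz]
    have h1 := Finset.card_le_card hsub
    have h3 : ({u, v} : Finset V).card ≤ 2 :=
      (Finset.card_insert_le u {v}).trans (by simp)
    have h4 := h2.1
    rw [← Finset.card_univ] at h4
    omega
  constructor
  · rintro ⟨hu, hv, hall⟩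
    refine ⟨hu, hv, ?_⟩
    have huC : u ∈ C.support := hu
    have hCnn : ¬ C.Nil := hC.not_nil
    set C' := C.rotate u huC with hC'def
    have hC' : C'.IsCycle := hC.rotate huC
    have hmemC' : ∀ z : V, z ∈ C'.support ↔ z ∈ C.support :=
      fun z => mem_support_rotate_iff_s8 C hCnn huC
    have hvC' : v ∈ C'.support := (hmemC' v).mpr hv
    obtain ⟨P, hPdef⟩ : ∃ P, P = C'.takeUntil v hvC' := ⟨_, rfl⟩
    obtain ⟨Q, hQdef⟩ : ∃ Q, Q = C'.dropUntil v hvC' := ⟨_, rfl⟩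
    have hspec : P.append Q = C' := by rw [hPdef, hQdef]; exact C'.take_spec hvC'
    have hsupp : C'.support = P.support ++ Q.support.tail := by
      rw [← hspec, Walk.support_append]
    have hCt : C'.support.tail = P.support.tail ++ Q.support.tail := by
      have h1 := hsupp
      rw [C'.support_eq_cons, P.support_eq_cons] at h1
      simpa only [List.cons_append, List.cons.injEq, true_and] using h1
    have hnd : C'.support.tail.Nodup := hC'.support_nodup
    rw [hCt, List.nodup_append] at hnd
    obtain ⟨hndP, hndQ, hdisj⟩ := hnd
    have hPnn : ¬ P.Nil := Walk.not_nil_of_ne hne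
    have hQnn : ¬ Q.Nil := Walk.not_nil_of_ne hne.symm
    have huQt : u ∈ Q.support.tail := end_mem_support_tail Q hQnn
    have hvPt : v ∈ P.support.tail := end_mem_support_tail P hPnn
    have hPp : P.IsPath := by
      apply Walk.IsPath.mk'
      rw [P.support_eq_cons, List.nodup_cons]
      exact ⟨fun hc => hdisj _ hc _ huQt rfl, hndP⟩
    have hQp : Q.IsPath := by
      apply Walk.IsPath.mk'
      rw [Q.support_eq_cons, List.nodup_cons]
      exact ⟨fun hc => hdisj _ hvPt _ hc rfl, hndQ⟩
    have hcondP : ∀ z ∈ P.support, z = u ∨ z = v ∨ z ∈ {z : V | z ≠ u ∧ z ≠ v} := by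
      intro z _
      by_cases h1 : z = u
      · exact Or.inl h1
      by_cases h2' : z = v
      · exact Or.inr (Or.inl h2')
      exact Or.inr (Or.inr ⟨h1, h2'⟩)
    have hcondQ : ∀ z ∈ Q.support, z = v ∨ z = u ∨ z ∈ {z : V | z ≠ u ∧ z ≠ v} := by
      intro z _
      by_cases h2' : z = v
      · exact Or.inl h2'
      by_cases h1 : z = u
      · exact Or.inr (Or.inl h1)
      exact Or.inr (Or.inr ⟨h1, h2'⟩)
    have key : ∀ {a b : V} (R : G.Walk a b), R.IsPath →
        (∀ z ∈ R.support, z = a ∨ z = b ∨ z ∈ {z : V | z ≠ u ∧ z ≠ v}) →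
        (∀ z ∈ C.support, z ≠ u → z ≠ v → z ∈ R.support) →
        (G.induce {z : V | z ≠ u ∧ z ≠ v}).Connected := by
      intro a b R hR hcond hWR
      obtain ⟨z0, hz0⟩ := hVne
      haveI : Nonempty ↥{z : V | z ≠ u ∧ z ≠ v} := ⟨⟨z0, hz0⟩⟩
      refine ⟨?_⟩
      intro x y
      obtain ⟨wx, hwxW, hwxr⟩ := hall ⟨x.1, x.2⟩
      obtain ⟨wy, hwyW, hwyr⟩ := hall ⟨y.1, y.2⟩
      have h1 : (G.induce {z : V | z ≠ u ∧ z ≠ v}).Reachable ⟨wx.1, wx.2⟩ ⟨wy.1, wy.2⟩ :=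
        reach_in_induced R hR hcond (hWR wx.1 hwxW wx.2.1 wx.2.2)
          (hWR wy.1 hwyW wy.2.1 wy.2.2) wx.2 wy.2
      exact hwxr.trans (h1.trans hwyr.symm)
    have hPl : 2 ≤ P.length := by
      by_contra hcon
      push_neg at hcon
      have h1 : 0 < P.length := Walk.not_nil_iff_lt_length.mp hPnn
      have hlen : P.support.tail.length = 1 := by
        have h5 := P.length_support
        have h6 : P.support.length = P.support.tail.length + 1 := by
          rw [P.support_eq_cons]; simp
        omega
      obtain ⟨w, hw⟩ := List.length_eq_one_iff.mp hlen
      rw [hw, List.mem_singleton] at hvPt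
      subst hvPt
      apply hdisc
      apply key Q hQp hcondQ
      intro z hz hz1 hz2
      have hz' : z ∈ C'.support := (hmemC' z).mpr hz
      rw [hsupp, List.mem_append] at hz'
      rcases hz' with h' | h'
      · rw [P.support_eq_cons, hw] at h'
        simp only [List.mem_cons, List.mem_singleton, List.not_mem_nil, or_false] at h'
        rcases h' with rfl | rfl
        · exact absurd rfl hz1
        · exact absurd rfl hz2
      · exact List.mem_of_mem_tail h'
    have hQl : 2 ≤ Q.length := by
      by_contra hcon
      push_neg at hcon
      have h1 : 0 < Q.length := Walk.not_nil_iff_lt_length.mp hQnn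
      have hlen : Q.support.tail.length = 1 := by
        have h5 := Q.length_support
        have h6 : Q.support.length = Q.support.tail.length + 1 := by
          rw [Q.support_eq_cons]; simp
        omega
      obtain ⟨w, hw⟩ := List.length_eq_one_iff.mp hlen
      rw [hw, List.mem_singleton] at huQt
      subst huQt
      apply hdisc
      apply key P hPp hcondP
      intro z hz hz1 hz2
      have hz' : z ∈ C'.support := (hmemC' z).mpr hz
      rw [hsupp, List.mem_append] at hz'
      rcases hz' with h' | h'
      · exact h'
      · rw [hw, List.mem_singleton] at h'
        exact absurd h' hz1
    have hinter : {x | x ∈ P.support} ∩ {x | x ∈ Q.support} = {u, v} := by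
      ext x
      simp only [Set.mem_inter_iff, Set.mem_setOf_eq, Set.mem_insert_iff,
        Set.mem_singleton_iff]
      constructor
      · rintro ⟨hxP, hxQ⟩
        by_cases h1 : x = u
        · exact Or.inl h1
        by_cases h2' : x = v
        · exact Or.inr h2'
        exfalso
        rw [P.support_eq_cons, List.mem_cons] at hxP
        rw [Q.support_eq_cons, List.mem_cons] at hxQ
        rcases hxP with rfl | hxP
        · exact h1 rfl
        rcases hxQ with rfl | hxQ
        · exact h2' rfl
        exact hdisj _ hxP _ hxQ rfl
      · rintro (rfl | rfl)
        · exact ⟨P.start_mem_support, Q.end_mem_support⟩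
        · exact ⟨P.end_mem_support, Q.start_mem_support⟩
    have hperm : (P.edges ++ Q.edges).Perm C.edges := by
      rw [← Walk.edges_append, hspec]
      exact (Walk.rotate_edges C u huC).perm
    obtain ⟨c, hcP, hcu, hcv⟩ := exists_interior P hPp hPl
    obtain ⟨d, hdQ, hdv, hdu⟩ := exists_interior Q hQp hQl
    set G' := G.induce {z : V | z ≠ u ∧ z ≠ v} with hG'
    have hPK : ∀ x (hxu : x ≠ u) (hxv : x ≠ v), x ∈ P.support →
        G'.connectedComponentMk ⟨x, hxu, hxv⟩ = G'.connectedComponentMk ⟨c, hcu, hcv⟩ := by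
      intro x hxu hxv hx
      exact ConnectedComponent.sound
        (reach_in_induced P hPp hcondP hx hcP ⟨hxu, hxv⟩ ⟨hcu, hcv⟩)
    have hQK : ∀ x (hxu : x ≠ u) (hxv : x ≠ v), x ∈ Q.support →
        G'.connectedComponentMk ⟨x, hxu, hxv⟩ = G'.connectedComponentMk ⟨d, hdu, hdv⟩ := by
      intro x hxu hxv hx
      exact ConnectedComponent.sound
        (reach_in_induced Q hQp hcondQ hx hdQ ⟨hxu, hxv⟩ ⟨hdu, hdv⟩)
    have hKall : ∀ K : G'.ConnectedComponent,
        K = G'.connectedComponentMk ⟨c, hcu, hcv⟩ ∨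
        K = G'.connectedComponentMk ⟨d, hdu, hdv⟩ := by
      intro K
      obtain ⟨x, rfl⟩ := K.exists_rep
      obtain ⟨w, hwW, hwr⟩ := hall ⟨x.1, x.2⟩
      have hKx : G'.connectedComponentMk x = G'.connectedComponentMk ⟨w.1, w.2⟩ :=
        ConnectedComponent.sound hwr
      have hw' : (w : V) ∈ C'.support := (hmemC' _).mpr hwW
      rw [hsupp, List.mem_append] at hw'
      rcases hw' with h' | h'
      · exact Or.inl (hKx.trans (hPK w.1 w.2.1 w.2.2 h'))
      · exact Or.inr (hKx.trans (hQK w.1 w.2.1 w.2.2 (List.mem_of_mem_tail h')))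
    have hK12 : G'.connectedComponentMk ⟨c, hcu, hcv⟩ ≠ G'.connectedComponentMk ⟨d, hdu, hdv⟩ := by
      intro hEq
      apply hdisc
      haveI : Nonempty ↥{z : V | z ≠ u ∧ z ≠ v} := ⟨⟨c, hcu, hcv⟩⟩
      refine ⟨?_⟩
      intro x y
      have hx := hKall (G'.connectedComponentMk x)
      have hy := hKall (G'.connectedComponentMk y)
      rw [← hEq] at hx hy
      have hx' : G'.connectedComponentMk x = G'.connectedComponentMk ⟨c, hcu, hcv⟩ := by
        rcases hx with h | h <;> exact h
      have hy' : G'.connectedComponentMk y = G'.connectedComponentMk ⟨c, hcu, hcv⟩ := by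
        rcases hy with h | h <;> exact h
      exact ConnectedComponent.exact (hx'.trans hy'.symm)
    exact ⟨P, Q, hPp, hQp, hPl, hQl, hinter, hperm,
      G'.connectedComponentMk ⟨c, hcu, hcv⟩, G'.connectedComponentMk ⟨d, hdu, hdv⟩,
      hK12, hPK, hQK, hKall⟩
  · rintro ⟨hu, hv, P, Q, hPp, hQp, hPl, hQl, hinter, hperm, K₁, K₂, hK12, hPK, hQK, hKall⟩
    refine ⟨hu, hv, ?_⟩
    intro x
    obtain ⟨c, hcP, hcu, hcv⟩ := exists_interior P hPp hPl
    obtain ⟨d, hdQ, hdv, hdu⟩ := exists_interior Q hQp hQl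
    have hPC : ∀ z ∈ P.support, z ∈ C.support := by
      apply support_subset_of_edges_subset P C
        (Walk.not_nil_iff_lt_length.mpr (by omega))
      intro e he
      exact hperm.subset (List.mem_append.mpr (Or.inl he))
    have hQC : ∀ z ∈ Q.support, z ∈ C.support := by
      apply support_subset_of_edges_subset Q C
        (Walk.not_nil_iff_lt_length.mpr (by omega))
      intro e he
      exact hperm.subset (List.mem_append.mpr (Or.inr he))
    rcases hKall ((G.induce {z : V | z ≠ u ∧ z ≠ v}).connectedComponentMk ⟨x.1, x.2⟩)
      with hK | hK
    · refine ⟨⟨c, hcu, hcv⟩, hPC c hcP, ?_⟩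
      exact ConnectedComponent.exact (hK.trans (hPK c hcu hcv hcP).symm)
    · refine ⟨⟨d, hdu, hdv⟩, hQC d hdQ, ?_⟩
      exact ConnectedComponent.exact (hK.trans (hQK d hdu hdv hdQ).symm)
end

section
/- Let G be a finite simple graph on vertex set V, let W ⊆ V, and suppose G has property (I3) with respect to W: for every vertex w ∉ W there exist three paths in G from w to vertices of W that pairwise intersect only in the vertex w and each of which meets W only in its final endpoint. Let a, b, c ∈ W be three vertices with a ≠ c, {a, b} an edge of G and {b, c} an edge of G. Let G′ be the graph obtained from G by adding one new vertex x adjacent to exactly a, b and c, and let W′ = (W ∖ {b}) ∪ {x}. Then G′ has property (I3) with respect to W′. (This is the combinatorial content of the claim that adding a new vertex in the outer face joined to two consecutive outer edges (a,b), (b,c) preserves internal 3-connectivity, where after the addition b becomes an internal vertex and x an outer vertex.) -/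
/-- The graph obtained from `G` by adding one new vertex (`Option.none`) adjacent to
exactly the vertices of `N`; all other adjacencies are those of `G`. -/
def addApexVertex {V : Type*} (G : SimpleGraph V) (N : Set V) : SimpleGraph (Option V) where
  Adj x y :=
    match x, y with
    | some u, some v => G.Adj u v
    | some u, none => u ∈ N
    | none, some v => v ∈ N
    | none, none => False
  symm := by
    constructor
    intro x y h
    cases x <;> cases y <;> simp_all <;> exact h.symm
  loopless := by
    constructor
    intro x h
    cases x <;> simp_all

/-- The natural embedding `G →g addApexVertex G N` via `Option.some`. -/
def apexHom {V : Type*} (G : SimpleGraph V) (N : Set V) : G →g addApexVertex G N :=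
  ⟨Option.some, fun h => h⟩

lemma apex_aux {V : Type*} (G : SimpleGraph V) (N W : Set V) {b : V} (hb : b ∈ N)
    {v p : V} (P : G.Walk v p) (hp : P.IsPath)
    (hend : ∀ y ∈ P.support, y ∈ W → y = p) (hpW : p ∈ W) :
    ∃ (p' : Option V) (P' : (addApexVertex G N).Walk (some v) p'),
      p' ∈ ((Option.some '' (W \ {b})) ∪ {Option.none} : Set (Option V)) ∧ P'.IsPath ∧
      (∀ y ∈ P'.support,
        y ∈ ((Option.some '' (W \ {b})) ∪ {Option.none} : Set (Option V)) → y = p') ∧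
      (∀ y, y ∈ P'.support ↔ (∃ z ∈ P.support, y = some z) ∨ (p = b ∧ y = none)) := by
  have hinj : Function.Injective (apexHom G N).toFun := Option.some_injective V
  have hQ : (P.map (apexHom G N)).IsPath := P.map_isPath_of_injective hinj hp
  have hsupQ : (P.map (apexHom G N)).support = P.support.map some :=
    SimpleGraph.Walk.support_map _ _
  by_cases hpb : p = b
  · subst hpb
    have hadj : (addApexVertex G N).Adj (some p) none := hb
    refine ⟨none, (P.map (apexHom G N)).concat hadj, Or.inr rfl, ?_, ?_, ?_⟩
    · erw [← SimpleGraph.Walk.isPath_reverse_iff, SimpleGraph.Walk.reverse_concat]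
      refine SimpleGraph.Walk.IsPath.cons ?_ ?_
      · erw [SimpleGraph.Walk.isPath_reverse_iff]; assumption
      · erw [SimpleGraph.Walk.support_reverse, hsupQ]
        simp
    · intro y hy hyW
      erw [SimpleGraph.Walk.support_concat, List.mem_append,
        hsupQ] at hy
      rcases hy with hy | hy
      · rcases List.mem_map.mp hy with ⟨z, hz, rfl⟩
        rcases hyW with ⟨z', hz', hzz⟩ | hyn
        · have hzz' : z' = z := Option.some_injective V hzz
          exact absurd (hend z hz (hzz' ▸ hz'.1)) (hzz' ▸ hz'.2)
        · exact absurd hyn (by simp)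
      · simpa using hy
    · intro y
      erw [SimpleGraph.Walk.support_concat, List.mem_append, hsupQ]
      simp [eq_comm]
  · refine ⟨some p, P.map (apexHom G N), Or.inl ⟨p, ⟨hpW, hpb⟩, rfl⟩, hQ, ?_, ?_⟩
    · intro y hy hyW
      erw [hsupQ] at hy
      rcases List.mem_map.mp hy with ⟨z, hz, rfl⟩
      rcases hyW with ⟨z', hz', hzz⟩ | hyn
      · have hzz' : z' = z := Option.some_injective V hzz
        exact congrArg some (hend z hz (hzz' ▸ hz'.1))
      · exact absurd hyn (by simp)
    · intro y
      erw [hsupQ]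
      simp [hpb, eq_comm]

/-- Adding a new vertex `x` adjacent to three vertices `a`, `b`, `c` of `W`, where
`{a, b}` and `{b, c}` are consecutive edges of the outer face, preserves property (I3):
the new graph has property (I3) with respect to `W' = (W ∖ {b}) ∪ {x}` (the vertex `b`
becomes internal and `x` becomes an outer vertex). -/
theorem propI3_addApexVertex_claw
    {V : Type*} (G : SimpleGraph V) (W : Set V) (hI3 : PropI3 G W)
    (a b c : V) (haW : a ∈ W) (hbW : b ∈ W) (hcW : c ∈ W)
    (hac : a ≠ c) (hab : G.Adj a b) (hbc : G.Adj b c) :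
    PropI3 (addApexVertex G {a, b, c})
      ((Option.some '' (W \ {b})) ∪ {Option.none}) := by
  set G' := addApexVertex G ({a, b, c} : Set V) with hG'
  set W' : Set (Option V) := (Option.some '' (W \ {b})) ∪ {Option.none} with hW'
  intro w hw
  match w with
  | none => exact absurd (Or.inr rfl) hw
  | some v =>
    by_cases hvb : v = b
    · subst hvb
      -- three single-edge paths from `b` to `a`, `c`, `none`
      have h1 : G'.Adj (some v) (some a) := hab.symm
      have h2 : G'.Adj (some v) (some c) := hbc
      have h3 : G'.Adj (some v) none := by
        show v ∈ ({a, v, c} : Set V); simp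
      refine ⟨some a, some c, none,
        SimpleGraph.Walk.cons h1 SimpleGraph.Walk.nil,
        SimpleGraph.Walk.cons h2 SimpleGraph.Walk.nil,
        SimpleGraph.Walk.cons h3 SimpleGraph.Walk.nil,
        Or.inl ⟨a, ⟨haW, hab.ne⟩, rfl⟩, Or.inl ⟨c, ⟨hcW, (hbc.ne).symm⟩, rfl⟩,
        Or.inr rfl, ?_, ?_, ?_, ?_, ?_, ?_, ?_, ?_, ?_⟩
      · simp [SimpleGraph.Walk.isPath_def, h1.ne]
      · simp [SimpleGraph.Walk.isPath_def, h2.ne]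
      · simp [SimpleGraph.Walk.isPath_def, h3.ne]
      · intro x hx hxW
        simp only [SimpleGraph.Walk.support_cons, SimpleGraph.Walk.support_nil,
          List.mem_cons, List.mem_singleton] at hx
        rcases hx with rfl | rfl | h
        · exact absurd hxW hw
        · rfl
        · exact absurd h List.not_mem_nil
      · intro x hx hxW
        simp only [SimpleGraph.Walk.support_cons, SimpleGraph.Walk.support_nil,
          List.mem_cons, List.mem_singleton] at hx
        rcases hx with rfl | rfl | h
        · exact absurd hxW hw
        · rfl
        · exact absurd h List.not_mem_nil
      · intro x hx hxW
        simp only [SimpleGraph.Walk.support_cons, SimpleGraph.Walk.support_nil,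
          List.mem_cons, List.mem_singleton] at hx
        rcases hx with rfl | rfl | h
        · exact absurd hxW hw
        · rfl
        · exact absurd h List.not_mem_nil
      · intro x hx hy
        simp only [SimpleGraph.Walk.support_cons, SimpleGraph.Walk.support_nil,
          List.mem_cons, List.mem_singleton] at hx hy
        rcases hx with rfl | rfl | h
        · rfl
        · rcases hy with h | h | h
          · exact absurd (Option.some_injective V h.symm) hab.ne'
          · exact absurd (Option.some_injective V h) hac
          · exact absurd h List.not_mem_nil
        · exact absurd h List.not_mem_nil
      · intro x hx hy
        simp only [SimpleGraph.Walk.support_cons, SimpleGraph.Walk.support_nil,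
          List.mem_cons, List.mem_singleton] at hx hy
        rcases hx with rfl | rfl | h
        · rfl
        · rcases hy with h | h | h
          · exact absurd (Option.some_injective V h.symm) hab.ne'
          · exact absurd h (by simp)
          · exact absurd h List.not_mem_nil
        · exact absurd h List.not_mem_nil
      · intro x hx hy
        simp only [SimpleGraph.Walk.support_cons, SimpleGraph.Walk.support_nil,
          List.mem_cons, List.mem_singleton] at hx hy
        rcases hx with rfl | rfl | h
        · rfl
        · rcases hy with h | h | h
          · exact absurd h.symm (by simp [hbc.ne])
          · exact absurd h (by simp)
          · exact absurd h List.not_mem_nil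
        · exact absurd h List.not_mem_nil
    · -- here `v ∉ W`
      have hvW : v ∉ W := by
        intro hvWmem
        exact hw (Or.inl ⟨v, ⟨hvWmem, hvb⟩, rfl⟩)
      obtain ⟨p, q, r, P₁, P₂, P₃, hpW, hqW, hrW, hP₁, hP₂, hP₃,
        he₁, he₂, he₃, h12, h13, h23⟩ := hI3 v hvW
      have hbN : b ∈ ({a, b, c} : Set V) := by simp
      obtain ⟨p', P₁', hp'W, hP₁', he₁', hs₁⟩ := apex_aux G _ W hbN P₁ hP₁ he₁ hpW
      obtain ⟨q', P₂', hq'W, hP₂', he₂', hs₂⟩ := apex_aux G _ W hbN P₂ hP₂ he₂ hqW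
      obtain ⟨r', P₃', hr'W, hP₃', he₃', hs₃⟩ := apex_aux G _ W hbN P₃ hP₃ he₃ hrW
      have hpq : p ≠ q := by
        intro h; subst h
        exact hvW ((h12 p P₁.end_mem_support P₂.end_mem_support) ▸ hpW)
      have hpr : p ≠ r := by
        intro h; subst h
        exact hvW ((h13 p P₁.end_mem_support P₃.end_mem_support) ▸ hpW)
      have hqr : q ≠ r := by
        intro h; subst h
        exact hvW ((h23 q P₂.end_mem_support P₃.end_mem_support) ▸ hqW)
      refine ⟨p', q', r', P₁', P₂', P₃', hp'W, hq'W, hr'W, hP₁', hP₂', hP₃',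
        he₁', he₂', he₃', ?_, ?_, ?_⟩
      · intro x hx hy
        rcases (hs₁ x).mp hx with ⟨z, hz, rfl⟩ | ⟨hpb, rfl⟩
        · rcases (hs₂ (some z)).mp hy with ⟨z', hz', hzz⟩ | ⟨_, h⟩
          · have hzz' : z = z' := Option.some_injective V hzz
            exact congrArg some (h12 z hz (by rw [hzz']; exact hz'))
          · exact absurd h (by simp)
        · rcases (hs₂ none).mp hy with ⟨z', _, h⟩ | ⟨hqb, _⟩
          · exact absurd h.symm (by simp)
          · exact absurd (hpb.trans hqb.symm) hpq
      · intro x hx hy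
        rcases (hs₁ x).mp hx with ⟨z, hz, rfl⟩ | ⟨hpb, rfl⟩
        · rcases (hs₃ (some z)).mp hy with ⟨z', hz', hzz⟩ | ⟨_, h⟩
          · have hzz' : z = z' := Option.some_injective V hzz
            exact congrArg some (h13 z hz (by rw [hzz']; exact hz'))
          · exact absurd h (by simp)
        · rcases (hs₃ none).mp hy with ⟨z', _, h⟩ | ⟨hrb, _⟩
          · exact absurd h.symm (by simp)
          · exact absurd (hpb.trans hrb.symm) hpr
      · intro x hx hy
        rcases (hs₂ x).mp hx with ⟨z, hz, rfl⟩ | ⟨hqb, rfl⟩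
        · rcases (hs₃ (some z)).mp hy with ⟨z', hz', hzz⟩ | ⟨_, h⟩
          · have hzz' : z = z' := Option.some_injective V hzz
            exact congrArg some (h23 z hz (by rw [hzz']; exact hz'))
          · exact absurd h (by simp)
        · rcases (hs₃ none).mp hy with ⟨z', _, h⟩ | ⟨hrb, _⟩
          · exact absurd h.symm (by simp)
          · exact absurd (hqb.trans hrb.symm) hqr
end

section
/- Let G be a finite 2-connected simple graph on vertex set V, let C be a cycle in G with vertex set W, and let a, b ∈ W be distinct vertices with {a, b} not an edge of G, such that C is the union of two internally disjoint paths P and Q from a to b. Suppose that every separation pair {u, v} of G is W-external (that is, u, v ∈ W and every connected component of the subgraph induced on V ∖ {u, v} contains a vertex of W), and additionally that no vertex of P (including a and b) belongs to any separation pair of G. Let G′ be the graph obtained from G by adding the edge {a, b}, and let W′ = W ∖ (the set of interior vertices of P). Then every separation pair {u, v} of G′ satisfies: u ∈ W′, v ∈ W′, and every connected component of the subgraph of G′ induced on V ∖ {u, v} contains a vertex of W′. (This is the combinatorial content of the claim that adding the edge (a, b), embedded so that the path P becomes internal, preserves internal 3-connectivity with respect to the new outer face formed by Q together with the edge {a,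 b}.) -/
private lemma induce_le_induce {V : Type*} {G G' : SimpleGraph V} (h : G ≤ G') (s : Set V) :
    G.induce s ≤ G'.induce s := fun _ _ hadj => h hadj

private lemma reachable_induce_of_walk {V : Type*} {G : SimpleGraph V} {s : Set V} :
    ∀ {u v : V} (w : G.Walk u v), (∀ x ∈ w.support, x ∈ s) →
      ∀ (hu : u ∈ s) (hv : v ∈ s), (G.induce s).Reachable ⟨u, hu⟩ ⟨v, hv⟩ := by
  intro u v w
  induction w with
  | nil => intro _ hu hv; rfl
  | @cons u c v hadj w ih =>
    intro h hu hv
    have hc : c ∈ s := h c (by simp)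
    have hstep : (G.induce s).Adj ⟨u, hu⟩ ⟨c, hc⟩ := hadj
    exact hstep.reachable.trans (ih (fun x hx => h x (by simp [hx])) hc hv)
/-- The pair `{u, v}` is `W`-external in `G`: both vertices lie in `W` and every
connected component of the graph induced on `V ∖ {u, v}` contains a vertex of `W`. -/
def IsWExternal {V : Type*} (G : SimpleGraph V) (W : Set V) (u v : V) : Prop :=
  u ∈ W ∧ v ∈ W ∧
  ∀ x : {z : V // z ≠ u ∧ z ≠ v},
    ∃ y : {z : V // z ≠ u ∧ z ≠ v}, (y : V) ∈ W ∧
      (G.induce {z | z ≠ u ∧ z ≠ v}).Reachable x y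

/-- Let `G` be 2-connected, let the cycle `C = P ++ Q.reverse` (with vertex set `W`) be
the union of two internally disjoint paths `P, Q` from `a` to `b`, where `{a, b}` is not
an edge of `G`. If every separation pair of `G` is `W`-external and no vertex of `P`
(including `a` and `b`) belongs to any separation pair of `G`, then in the graph `G'`
obtained by adding the edge `{a, b}` every separation pair is `W'`-external, where
`W' = W ∖ (interior vertices of P)` (the path `P` becomes internal). -/
theorem add_edge_preserves_external_separation_pairs
    {V : Type*} [Fintype V] (G : SimpleGraph V) (h2 : TwoConnected G)
    (a b : V) (hab : a ≠ b) (hnadj : ¬ G.Adj a b)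
    (P Q : G.Walk a b) (hP : P.IsPath) (hQ : Q.IsPath)
    (hcyc : (P.append Q.reverse).IsCycle)
    (W : Set V) (hW : W = {x | x ∈ P.support} ∪ {x | x ∈ Q.support})
    (hext : ∀ p q : V, IsSeparationPair G p q → IsWExternal G W p q)
    (hPsep : ∀ x ∈ P.support, ∀ y : V,
      ¬ IsSeparationPair G x y ∧ ¬ IsSeparationPair G y x) :
    ∀ p q : V,
      IsSeparationPair (G ⊔ SimpleGraph.fromEdgeSet {s(a, b)}) p q →
      IsWExternal (G ⊔ SimpleGraph.fromEdgeSet {s(a, b)})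
        (W \ {x | x ∈ P.support ∧ x ≠ a ∧ x ≠ b}) p q := by

  classical
  intro p q hsep
  obtain ⟨hpq, hdisc⟩ := hsep
  set G' := G ⊔ SimpleGraph.fromEdgeSet {s(a, b)} with hG'
  have hle : G ≤ G' := le_sup_left
  have hmono := induce_le_induce hle {z : V | z ≠ p ∧ z ≠ q}
  have hGdisc : ¬ (G.induce {z | z ≠ p ∧ z ≠ q}).Connected :=
    fun hc => hdisc (hc.mono hmono)
  have hsepG : IsSeparationPair G p q := ⟨hpq, hGdisc⟩
  have hpP : p ∉ P.support := fun h => (hPsep p h q).1 hsepG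
  have hqP : q ∉ P.support := fun h => (hPsep q h p).2 hsepG
  obtain ⟨hpW, hqW, hcomp⟩ := hext p q hsepG
  refine ⟨⟨hpW, fun h => hpP h.1⟩, ⟨hqW, fun h => hqP h.1⟩, ?_⟩
  intro x
  obtain ⟨y, hyW, hreach⟩ := hcomp x
  by_cases hy : (y : V) ∈ P.support
  · -- y is on P; connect to a instead
    have haP : a ∈ P.support := P.start_mem_support
    have ha : a ≠ p ∧ a ≠ q := ⟨fun h => hpP (h ▸ haP), fun h => hqP (h ▸ haP)⟩
    refine ⟨⟨a, ha⟩, ⟨?_, fun h => h.2.1 rfl⟩, ?_⟩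
    · rw [hW]; exact Or.inl haP
    · have hWsub : ∀ z ∈ (P.takeUntil (y : V) hy).support, z ∈ {z : V | z ≠ p ∧ z ≠ q} := by
        intro z hz
        have hzP : z ∈ P.support := P.support_takeUntil_subset hy hz
        exact ⟨fun h => hpP (h ▸ hzP), fun h => hqP (h ▸ hzP)⟩
      have hwalk := reachable_induce_of_walk (P.takeUntil (y : V) hy) hWsub ha y.2
      have hya : (G.induce {z : V | z ≠ p ∧ z ≠ q}).Reachable y ⟨a, ha⟩ := by
        simpa using hwalk.symm
      exact ((hreach.trans hya).mono hmono)
  · refine ⟨y, ⟨hyW, fun h => hy h.1⟩, hreach.mono hmono⟩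
end
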